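/- The unique negative solution x* of the equation -xΦ(x) = φ(x)(1 - 2Φ(x)) satisfies x* ∈ (-0.85, -0.84), and consequently q* = Φ(x*) ∈ (0.197, 0.199). -/

import Mathlib

open MeasureTheory Real

/-- Standard normal density. -/
noncomputable def stdPdf (x : ℝ) : ℝ := (Real.sqrt (2 * Real.pi))⁻¹ * Real.exp (-x ^ 2 / 2)

/-- Standard normal distribution function. -/
noncomputable def stdCdf (x : ℝ) : ℝ := ∫ t in Set.Iic x, stdPdf t


noncomputable def ee (t : ℝ) : ℝ := Real.exp (-t ^ 2 / 2)
noncomputable def JJ (a : ℝ) : ℝ := ∫ s in (0:ℝ)..a, ee s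

lemma ee_pos (t : ℝ) : 0 < ee t := Real.exp_pos _
lemma ee_le_one (t : ℝ) : ee t ≤ 1 := by
  rw [ee, show (1:ℝ) = Real.exp 0 by simp]
  apply Real.exp_le_exp.2; nlinarith [sq_nonneg t]
lemma ee_cont : Continuous ee := by
  unfold ee; fun_prop
lemma ee_anti {a b : ℝ} (ha : 0 ≤ a) (hab : a ≤ b) : ee b ≤ ee a := by
  apply Real.exp_le_exp.2; nlinarith
lemma ee_integrable : Integrable ee := by
  have : Integrable (fun x : ℝ => Real.exp (-(1/2) * x ^ 2)) := integrable_exp_neg_mul_sq (by norm_num)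
  convert this using 2 with x
  rw [ee]; ring_nf
lemma ee_intervalIntegrable (a b : ℝ) : IntervalIntegrable ee volume a b :=
  ee_cont.intervalIntegrable a b

lemma sqrt_two_pi_sq : Real.sqrt (2 * Real.pi) ^ 2 = 2 * Real.pi := Real.sq_sqrt (by positivity)
lemma c_lo : 2.5066282 < Real.sqrt (2 * Real.pi) := by
  nlinarith [Real.pi_gt_d20, sqrt_two_pi_sq, Real.sqrt_nonneg (2 * Real.pi)]
lemma c_hi : Real.sqrt (2 * Real.pi) < 2.5066283 := by
  nlinarith [Real.pi_lt_d20, sqrt_two_pi_sq, Real.sqrt_nonneg (2 * Real.pi)]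
lemma c_pos : 0 < Real.sqrt (2 * Real.pi) := lt_trans (by norm_num) c_lo

lemma stdPdf_eq (x : ℝ) : stdPdf x = (Real.sqrt (2 * Real.pi))⁻¹ * ee x := rfl
lemma stdPdf_pos (x : ℝ) : 0 < stdPdf x := by
  rw [stdPdf_eq]
  have := ee_pos x
  have := c_pos
  positivity
lemma stdPdf_fun_eq : stdPdf = fun x => (Real.sqrt (2 * Real.pi))⁻¹ * ee x := rfl
lemma stdPdf_integrable : Integrable stdPdf := by
  rw [stdPdf_fun_eq]
  exact ee_integrable.const_mul _

lemma integral_ee_Iic_zero : ∫ t in Set.Iic (0:ℝ), ee t = Real.sqrt (2 * Real.pi) / 2 := by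
  have h1 : ∫ t in Set.Ioi (0:ℝ), ee (-t) = ∫ t in Set.Iic (-0:ℝ), ee t :=
    integral_comp_neg_Ioi 0 ee
  have h2 : ∀ t : ℝ, ee (-t) = ee t := by intro t; rw [ee, ee]; ring_nf
  simp_rw [h2, neg_zero] at h1
  rw [← h1]
  have h3 : ∀ t : ℝ, ee t = Real.exp (-(1/2) * t ^ 2) := by intro t; rw [ee]; ring_nf
  simp_rw [h3]
  rw [integral_gaussian_Ioi]
  congr 1
  rw [show Real.pi / (1/2) = 2 * Real.pi by ring]

lemma stdCdf_zero : stdCdf 0 = 1 / 2 := by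
  rw [stdCdf]
  rw [stdPdf_fun_eq]
  rw [MeasureTheory.integral_const_mul, integral_ee_Iic_zero]
  rw [inv_mul_eq_div]
  rw [div_eq_iff (by positivity : Real.sqrt (2*Real.pi) ≠ 0)]
  ring

lemma stdCdf_repr {x : ℝ} (hx : x ≤ 0) :
    stdCdf x = 1 / 2 - (Real.sqrt (2 * Real.pi))⁻¹ * JJ (-x) := by
  have hsplit : stdCdf 0 - stdCdf x = ∫ t in Set.Ioc x 0, stdPdf t := by
    rw [stdCdf, stdCdf, ← MeasureTheory.integral_diff measurableSet_Iic
      (stdPdf_integrable.integrableOn) (Set.Iic_subset_Iic.2 hx), Set.Iic_sdiff_Iic]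
  have h2 : ∫ t in Set.Ioc x 0, stdPdf t = ∫ t in x..0, stdPdf t := by
    rw [intervalIntegral.integral_of_le hx]
  have h3 : ∫ t in x..0, stdPdf t = (Real.sqrt (2 * Real.pi))⁻¹ * ∫ t in x..0, ee t := by
    rw [stdPdf_fun_eq, intervalIntegral.integral_const_mul]
  have hev : ∀ t : ℝ, ee (-t) = ee t := by intro t; rw [ee, ee]; ring_nf
  have h4 : JJ (-x) = ∫ t in x..0, ee t := by
    rw [JJ]
    calc ∫ t in (0:ℝ)..(-x), ee t = ∫ t in (0:ℝ)..(-x), ee (-t) := by simp_rw [hev]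
    _ = ∫ t in (-(-x))..(-0:ℝ), ee t := intervalIntegral.integral_comp_neg ee
    _ = ∫ t in x..0, ee t := by norm_num
  have hz := stdCdf_zero
  have : stdCdf 0 - stdCdf x = (Real.sqrt (2 * Real.pi))⁻¹ * JJ (-x) := by
    rw [hsplit, h2, h3, h4]
  linarith



-- pointwise exp bound, n = 6
lemma e_approx {t : ℝ} (h2 : t ^ 2 ≤ 2) :
    |ee t - (1 - t^2/2 + t^4/8 - t^6/48 + t^8/384 - t^10/3840)| ≤ (t^2/2)^6 * (7/4320) := by
  have hx : |(-t^2/2 : ℝ)| ≤ 1 := by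
    rw [abs_le]; constructor <;> nlinarith [sq_nonneg t]
  have := Real.exp_bound hx (by norm_num : 0 < 6)
  have hsum : ∑ m ∈ Finset.range 6, (-t^2/2)^m / (m.factorial : ℝ)
      = 1 - t^2/2 + t^4/8 - t^6/48 + t^8/384 - t^10/3840 := by
    simp [Finset.sum_range_succ, Nat.factorial]
    ring
  rw [hsum] at this
  have habs : |(-t^2/2 : ℝ)| = t^2/2 := by
    rw [abs_of_nonpos (by nlinarith [sq_nonneg t])]; ring
  rw [habs] at this
  calc |ee t - _| = |Real.exp (-t^2/2) - _| := by rw [ee]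
  _ ≤ (t^2/2)^6 * ((6+1)/(720*6) : ℝ) := by
      convert this using 3 <;> norm_num [Nat.factorial]
  _ ≤ (t^2/2)^6 * (7/4320) := by norm_num



lemma poly_integral (a : ℝ) :
    ∫ s in (0:ℝ)..a, (1 - s^2/2 + s^4/8 - s^6/48 + s^8/384 - s^10/3840)
      = a - a^3/6 + a^5/40 - a^7/336 + a^9/3456 - a^11/42240 := by
  have key : ∀ s : ℝ, HasDerivAt (fun u : ℝ =>
      u - u^3/6 + u^5/40 - u^7/336 + u^9/3456 - u^11/42240)
      (1 - s^2/2 + s^4/8 - s^6/48 + s^8/384 - s^10/3840) s := by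
    intro s
    have h := ((((((hasDerivAt_id s).sub ((hasDerivAt_pow 3 s).div_const 6)).add
      ((hasDerivAt_pow 5 s).div_const 40)).sub ((hasDerivAt_pow 7 s).div_const 336)).add
      ((hasDerivAt_pow 9 s).div_const 3456)).sub ((hasDerivAt_pow 11 s).div_const 42240))
    refine h.congr_deriv ?_
    push_cast
    ring
  rw [intervalIntegral.integral_eq_sub_of_hasDerivAt (fun s _ => key s)
    (by apply Continuous.intervalIntegrable; fun_prop)]
  norm_num

lemma J_approx {a : ℝ} (h0 : 0 ≤ a) (h2 : a ^ 2 ≤ 2) :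
    |JJ a - (a - a^3/6 + a^5/40 - a^7/336 + a^9/3456 - a^11/42240)| ≤ a * ((a^2/2)^6 * (7/4320)) := by
  have hpi : IntervalIntegrable (fun s : ℝ => (1 - s^2/2 + s^4/8 - s^6/48 + s^8/384 - s^10/3840)) volume 0 a := by
    apply Continuous.intervalIntegrable; fun_prop
  have hdiff : JJ a - (a - a^3/6 + a^5/40 - a^7/336 + a^9/3456 - a^11/42240)
      = ∫ s in (0:ℝ)..a, (ee s - (1 - s^2/2 + s^4/8 - s^6/48 + s^8/384 - s^10/3840)) := by
    rw [intervalIntegral.integral_sub (ee_cont.intervalIntegrable 0 a) hpi, poly_integral, JJ]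
  rw [hdiff]
  have hb : ∀ s ∈ Set.uIoc (0:ℝ) a,
      ‖ee s - (1 - s^2/2 + s^4/8 - s^6/48 + s^8/384 - s^10/3840)‖ ≤ (a^2/2)^6 * (7/4320) := by
    intro s hs
    rw [Set.uIoc_of_le h0] at hs
    obtain ⟨hs1, hs2⟩ := hs
    have hs2' : s^2 ≤ a^2 := by nlinarith
    calc ‖_‖ ≤ (s^2/2)^6 * (7/4320) := e_approx (le_trans hs2' h2)
    _ ≤ (a^2/2)^6 * (7/4320) := by
        have : (s^2/2)^6 ≤ (a^2/2)^6 := by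
          apply pow_le_pow_left₀ (by positivity) (by linarith)
        linarith
  calc |∫ s in (0:ℝ)..a, _| ≤ ((a^2/2)^6 * (7/4320)) * |a - 0| :=
        intervalIntegral.norm_integral_le_of_norm_le_const hb
  _ = a * ((a^2/2)^6 * (7/4320)) := by rw [abs_of_nonneg (by linarith)]; ring


lemma JJ_le_of {r B : ℝ} (h0 : 0 ≤ r) (h2 : r^2 ≤ 2)
    (h : r - r^3/6 + r^5/40 - r^7/336 + r^9/3456 - r^11/42240 + r * ((r^2/2)^6 * (7/4320)) ≤ B) :
    JJ r ≤ B := by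
  have := J_approx h0 h2; rw [abs_le] at this; linarith [this.2]
lemma le_JJ_of {r B : ℝ} (h0 : 0 ≤ r) (h2 : r^2 ≤ 2)
    (h : B ≤ r - r^3/6 + r^5/40 - r^7/336 + r^9/3456 - r^11/42240 - r * ((r^2/2)^6 * (7/4320))) :
    B ≤ JJ r := by
  have := J_approx h0 h2; rw [abs_le] at this; linarith [this.1]
lemma ee_le_of {r B : ℝ} (h2 : r^2 ≤ 2)
    (h : 1 - r^2/2 + r^4/8 - r^6/48 + r^8/384 - r^10/3840 + (r^2/2)^6 * (7/4320) ≤ B) :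
    ee r ≤ B := by
  have := e_approx h2; rw [abs_le] at this; linarith [this.2]
lemma le_ee_of {r B : ℝ} (h2 : r^2 ≤ 2)
    (h : B ≤ 1 - r^2/2 + r^4/8 - r^6/48 + r^8/384 - r^10/3840 - (r^2/2)^6 * (7/4320)) :
    B ≤ ee r := by
  have := e_approx h2; rw [abs_le] at this; linarith [this.1]



lemma JJ_mono {a b : ℝ} (hab : a ≤ b) : JJ a ≤ JJ b := by
  have hsplit := intervalIntegral.integral_add_adjacent_intervals (μ := volume)
    (ee_cont.intervalIntegrable 0 a) (ee_cont.intervalIntegrable a b)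
  have hpos : 0 ≤ ∫ s in a..b, ee s :=
    intervalIntegral.integral_nonneg hab (fun x _ => (ee_pos x).le)
  rw [JJ, JJ]; linarith [hsplit]

lemma JJ_nonneg {a : ℝ} (h : 0 ≤ a) : 0 ≤ JJ a :=
  intervalIntegral.integral_nonneg h (fun x _ => (ee_pos x).le)

lemma JJ_le_self {a : ℝ} (h : 0 ≤ a) : JJ a ≤ a := by
  have : ∀ u ∈ Set.Icc (0:ℝ) a, ee u ≤ 1 := fun u _ => ee_le_one u
  calc JJ a ≤ ∫ _ in (0:ℝ)..a, (1:ℝ) := by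
        apply intervalIntegral.integral_mono_on h (ee_cont.intervalIntegrable 0 a)
          intervalIntegrable_const this
  _ = a := by simp

section Brackets
variable {t t1 t2 J1 J2 E1 E2 : ℝ}
local notation "c" => Real.sqrt (2 * Real.pi)

lemma bracketA (h1 : t1 ≤ t) (h2 : t ≤ t2) (h0 : 0 < t1)
    (hJ : JJ t2 ≤ J2) (hE1 : ee t1 ≤ E1)
    (heq : c * t * (c/2 - JJ t) = 2 * ee t * JJ t)
    (hnum : 2 * E1 * J2 < 2.5066282 * t1 * (2.5066282/2 - J2)) : False := by
  have hclo : (2.5066282:ℝ) < c := by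
    nlinarith [Real.pi_gt_d20, Real.sq_sqrt (by positivity : (0:ℝ) ≤ 2*Real.pi),
      Real.sqrt_nonneg (2*Real.pi)]
  have hJt : JJ t ≤ J2 := le_trans (JJ_mono h2) hJ
  have hJtpos : 0 ≤ JJ t := JJ_nonneg (by linarith)
  have hJ2pos : 0 ≤ J2 := le_trans hJtpos hJt
  have hE1pos : 0 < E1 := lt_of_lt_of_le (ee_pos t1) hE1
  have hfac : (0:ℝ) < 2.5066282/2 - J2 := by nlinarith
  have het : ee t ≤ E1 := le_trans (ee_anti (le_of_lt h0) h1) hE1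
  have hetpos : 0 < ee t := ee_pos t
  have hLHS : 2.5066282 * t1 * (2.5066282/2 - J2) ≤ c * t * (c/2 - JJ t) := by
    have h1' : 2.5066282 * t1 ≤ c * t := by nlinarith
    have h2' : 2.5066282/2 - J2 ≤ c/2 - JJ t := by nlinarith
    nlinarith
  have hRHS : 2 * ee t * JJ t ≤ 2 * E1 * J2 := by nlinarith
  linarith [heq, hLHS, hRHS]

lemma bracketB (h1 : t1 ≤ t) (h2 : t ≤ t2) (h0 : 0 < t1)
    (hJ1 : J1 ≤ JJ t1) (hJ2 : JJ t2 ≤ J2) (hsafe : J2 ≤ 1.25)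
    (hE2 : E2 ≤ ee t2) (hE2p : 0 ≤ E2) (hJ1p : 0 ≤ J1)
    (heq : c * t * (c/2 - JJ t) = 2 * ee t * JJ t)
    (hnum : 2.5066283 * t2 * (2.5066283/2 - J1) < 2 * E2 * J1) : False := by
  have hclo : (2.5066282:ℝ) < c := by
    nlinarith [Real.pi_gt_d20, Real.sq_sqrt (by positivity : (0:ℝ) ≤ 2*Real.pi),
      Real.sqrt_nonneg (2*Real.pi)]
  have hchi : c < 2.5066283 := by
    nlinarith [Real.pi_lt_d20, Real.sq_sqrt (by positivity : (0:ℝ) ≤ 2*Real.pi),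
      Real.sqrt_nonneg (2*Real.pi)]
  have hJt : JJ t ≤ J2 := le_trans (JJ_mono h2) hJ2
  have hJt1 : J1 ≤ JJ t := le_trans hJ1 (JJ_mono h1)
  have hfac : 0 ≤ c/2 - JJ t := by nlinarith
  have het : E2 ≤ ee t := le_trans hE2 (ee_anti (by linarith) h2)
  have hLHS : c * t * (c/2 - JJ t) ≤ 2.5066283 * t2 * (2.5066283/2 - J1) := by
    have h1' : c * t ≤ 2.5066283 * t2 := by nlinarith
    have h2' : c/2 - JJ t ≤ 2.5066283/2 - J1 := by nlinarith
    nlinarith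
  have hRHS : 2 * E2 * J1 ≤ 2 * ee t * JJ t := by nlinarith
  linarith [heq, hLHS, hRHS]

lemma regionA1 (ht0 : 0 < t) (ht : t ≤ 0.455)
    (heq : c * t * (c/2 - JJ t) = 2 * ee t * JJ t) : False := by
  have hchi : c < 2.5066283 := by
    nlinarith [Real.pi_lt_d20, Real.sq_sqrt (by positivity : (0:ℝ) ≤ 2*Real.pi),
      Real.sqrt_nonneg (2*Real.pi)]
  have hc2 : c^2 = 2 * Real.pi := Real.sq_sqrt (by positivity)
  have hcpos : (0:ℝ) < c := Real.sqrt_pos.2 (by positivity)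
  have hJle : JJ t ≤ t := JJ_le_self (le_of_lt ht0)
  have hJpos : 0 ≤ JJ t := JJ_nonneg (le_of_lt ht0)
  have hee : ee t ≤ 1 := ee_le_one t
  have heepos : 0 < ee t := ee_pos t
  -- c * t * (c/2 - JJ t) ≥ t * (π - c*t) > 2*t ≥ 2 * ee t * JJ t
  have hpi : (3.1415926:ℝ) < Real.pi := by nlinarith [Real.pi_gt_d20]
  have h1 : c * t ≤ 1.1405159 := by nlinarith
  have h2 : c * t * JJ t ≤ 1.1405159 * JJ t := by nlinarith
  have h3 : 2 * ee t * JJ t ≤ 2 * JJ t := by nlinarith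
  have h5 : c * t * (c/2 - JJ t) = Real.pi * t - c * t * JJ t := by nlinarith [hc2]
  nlinarith

end Brackets


noncomputable def MM (s : ℝ) : ℝ := stdPdf s / (2 * stdPdf s - s)
noncomputable def MM' (s : ℝ) : ℝ := stdPdf s * (s^2+1) / (2 * stdPdf s - s)^2

lemma hasDerivAt_stdPdf (s : ℝ) : HasDerivAt stdPdf (-s * stdPdf s) s := by
  have h1 : HasDerivAt (fun x : ℝ => -x^2/2) (-s) s := by
    have := (hasDerivAt_pow 2 s).neg.div_const 2
    refine this.congr_deriv ?_; push_cast; ring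
  have h2 := (h1.exp).const_mul (Real.sqrt (2 * Real.pi))⁻¹
  have hfe : stdPdf = fun x => (Real.sqrt (2 * Real.pi))⁻¹ * Real.exp (-x^2/2) := rfl
  rw [hfe]
  refine h2.congr_deriv ?_
  ring

lemma denom_pos {s : ℝ} (hs : s ≤ 0) : 0 < 2 * stdPdf s - s :=
  by nlinarith [stdPdf_pos s]

lemma hasDerivAt_MM {s : ℝ} (hs : s ≤ 0) : HasDerivAt MM (MM' s) s := by
  have hd := hasDerivAt_stdPdf s
  have hden : HasDerivAt (fun u : ℝ => 2 * stdPdf u - u) (2 * (-s * stdPdf s) - 1) s :=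
    (hd.const_mul 2).sub (hasDerivAt_id s)
  have hne : 2 * stdPdf s - s ≠ 0 := ne_of_gt (denom_pos hs)
  have := hd.div hden hne
  refine this.congr_deriv ?_
  rw [MM']
  field_simp
  ring

lemma key_bound {s : ℝ} (hs : s ≤ -1.4) : 4 * stdPdf s * (stdPdf s - s) < 0.95 := by
  have he14 : ee 1.4 ≤ 0.37568 := by
    have := e_approx (t := 1.4) (by norm_num)
    rw [abs_le] at this
    norm_num at this ⊢
    linarith [this.2]
  have hcl := c_lo
  have hp14 : stdPdf s ≤ 0.14988 := by
    have h1 : ee s ≤ ee 1.4 := by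
      rw [ee, ee]; apply Real.exp_le_exp.2; nlinarith
    rw [stdPdf_fun_eq]
    have hc : (0:ℝ) < Real.sqrt (2*Real.pi) := by linarith
    have : (Real.sqrt (2*Real.pi))⁻¹ ≤ (2.5066282)⁻¹ := by
      apply inv_anti₀ (by norm_num) (le_of_lt hcl)
    calc (Real.sqrt (2*Real.pi))⁻¹ * ee s ≤ (2.5066282)⁻¹ * ee 1.4 := by
          apply mul_le_mul this h1 (le_of_lt (Real.exp_pos _)) (by norm_num)
    _ ≤ 0.14988 := by norm_num; linarith
  have hsp : (-s) * stdPdf s ≤ 0.20984 := by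
    have hu : (1.4:ℝ) ≤ -s := by linarith
    have hmono : (-s) * ee (-s) ≤ 1.4 * ee 1.4 := by
      rw [ee, ee]
      have hy : (0:ℝ) ≤ ((-s)^2 - 1.96)/2 := by nlinarith
      have hexp : 1 + ((-s)^2 - 1.96)/2 ≤ Real.exp (((-s)^2 - 1.96)/2) := by
        linarith [Real.add_one_le_exp (((-s)^2 - 1.96)/2)]
      have hfac : (-s) ≤ 1.4 * (1 + ((-s)^2 - 1.96)/2) := by nlinarith [sq_nonneg (-s - 1.4)]
      have hsplit : Real.exp (-(-s)^2/2) * Real.exp (((-s)^2 - 1.96)/2) = Real.exp (-(1.4:ℝ)^2/2) := by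
        rw [← Real.exp_add]; congr 1; ring
      have hpos := Real.exp_pos (-(-s)^2/2)
      calc (-s) * Real.exp (-(-s)^2/2) ≤ 1.4 * (1 + ((-s)^2 - 1.96)/2) * Real.exp (-(-s)^2/2) := by
            apply mul_le_mul_of_nonneg_right hfac (le_of_lt hpos)
      _ ≤ 1.4 * Real.exp (((-s)^2-1.96)/2) * Real.exp (-(-s)^2/2) := by
            have := mul_le_mul_of_nonneg_right hexp (le_of_lt hpos)
            nlinarith [hpos]
      _ = 1.4 * Real.exp (-(1.4:ℝ)^2/2) := by rw [mul_assoc, mul_comm (Real.exp _), hsplit]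
      _ = 1.4 * Real.exp (-(1.4:ℝ)^2/2) := rfl
    have hees : ee s = ee (-s) := by rw [ee, ee]; ring_nf
    rw [stdPdf_fun_eq]
    have : (-s) * ((Real.sqrt (2*Real.pi))⁻¹ * ee s) = (Real.sqrt (2*Real.pi))⁻¹ * ((-s) * ee (-s)) := by
      rw [hees]; ring
    rw [this]
    have hc : (0:ℝ) < Real.sqrt (2*Real.pi) := by linarith
    calc (Real.sqrt (2*Real.pi))⁻¹ * ((-s) * ee (-s)) ≤ (2.5066282)⁻¹ * (1.4 * ee 1.4) := by
          apply mul_le_mul (inv_anti₀ (by norm_num) (le_of_lt hcl)) hmono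
            (mul_nonneg (by linarith) (le_of_lt (Real.exp_pos _))) (by norm_num)
    _ ≤ 0.20984 := by norm_num; nlinarith [he14]
  nlinarith [stdPdf_pos s, hp14, hsp]

lemma stdPdf_cont : Continuous stdPdf := by
  have hfe : stdPdf = fun x => (Real.sqrt (2 * Real.pi))⁻¹ * Real.exp (-x^2/2) := rfl
  rw [hfe]; fun_prop

lemma pdf_lt_MM' {s : ℝ} (hs : s ≤ -1.4) : stdPdf s < MM' s := by
  have hd := denom_pos (by linarith : s ≤ 0)
  have hk := key_bound hs
  have hp := stdPdf_pos s
  rw [MM', lt_div_iff₀ (by positivity)]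
  nlinarith [mul_pos hp (by linarith : (0:ℝ) < 1 - 4 * stdPdf s * (stdPdf s - s))]

lemma MM'_nonneg {s : ℝ} (hs : s ≤ 0) : 0 ≤ MM' s := by
  have hd := denom_pos hs
  have hp := stdPdf_pos s
  rw [MM']
  positivity

lemma MM'_le {s : ℝ} (hs : s ≤ -1.4) : MM' s ≤ 2 * stdPdf s := by
  have hd := denom_pos (by linarith : s ≤ 0)
  have hp := stdPdf_pos s
  rw [MM', div_le_iff₀ (by positivity)]
  have hds : (-s) ≤ 2 * stdPdf s - s := by nlinarith
  have hd2 : s^2 ≤ (2 * stdPdf s - s)^2 := by nlinarith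
  have h1 : (1:ℝ) ≤ (2 * stdPdf s - s)^2 := by nlinarith
  nlinarith [mul_le_mul_of_nonneg_left hd2 hp.le, mul_le_mul_of_nonneg_left h1 hp.le]

lemma MM'_contOn {x : ℝ} (hx : x ≤ 0) : ContinuousOn MM' (Set.Iic x) := by
  have : ∀ s ∈ Set.Iic x, 2 * stdPdf s - s ≠ 0 := fun s hs =>
    ne_of_gt (denom_pos (le_trans hs hx))
  apply ContinuousOn.div
  · exact (stdPdf_cont.mul (by fun_prop)).continuousOn
  · exact (((continuous_const.mul stdPdf_cont).sub continuous_id).pow 2).continuousOn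
  · intro s hs; exact pow_ne_zero 2 (this s hs)

lemma MM'_integrableOn {x : ℝ} (hx : x ≤ -1.4) : IntegrableOn MM' (Set.Iic x) := by
  apply MeasureTheory.Integrable.mono ((stdPdf_integrable.const_mul 2).integrableOn)
    ((MM'_contOn (by linarith)).aestronglyMeasurable measurableSet_Iic)
  filter_upwards [MeasureTheory.ae_restrict_mem measurableSet_Iic] with s hs
  have h1 := MM'_nonneg (le_trans hs (by linarith : x ≤ 0))
  have h2 := MM'_le (le_trans hs hx)
  have h3 := stdPdf_pos s
  rw [Real.norm_eq_abs, Real.norm_eq_abs, abs_of_nonneg h1, abs_of_nonneg (by linarith)]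
  exact h2

lemma stdPdf_tendsto : Filter.Tendsto stdPdf Filter.atBot (nhds 0) := by
  have hc : (0:ℝ) < Real.sqrt (2*Real.pi) := by linarith [c_lo]
  apply squeeze_zero' (g := fun s => (Real.sqrt (2*Real.pi))⁻¹ * Real.exp s)
  · filter_upwards with s; exact (stdPdf_pos s).le
  · filter_upwards [Filter.eventually_le_atBot (-2:ℝ)] with s hs
    have hfe : stdPdf s = (Real.sqrt (2*Real.pi))⁻¹ * Real.exp (-s^2/2) := rfl
    rw [hfe]
    have : Real.exp (-s^2/2) ≤ Real.exp s := by
      apply Real.exp_le_exp.2; nlinarith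
    apply mul_le_mul_of_nonneg_left this (by positivity)
  · have := Real.tendsto_exp_atBot.const_mul (Real.sqrt (2*Real.pi))⁻¹
    simpa using this

lemma MM_tendsto : Filter.Tendsto MM Filter.atBot (nhds 0) := by
  apply squeeze_zero' (g := stdPdf)
  · filter_upwards [Filter.eventually_le_atBot (0:ℝ)] with s hs
    have := stdPdf_pos s; have := denom_pos hs
    rw [MM]; positivity
  · filter_upwards [Filter.eventually_le_atBot (-1:ℝ)] with s hs
    have hp := stdPdf_pos s
    have hd : (1:ℝ) ≤ 2 * stdPdf s - s := by nlinarith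
    rw [MM]
    exact div_le_self hp.le hd
  · exact stdPdf_tendsto

lemma tail_lemma {x : ℝ} (hx : x ≤ -1.4) : stdCdf x * (2 * stdPdf x - x) < stdPdf x := by
  have hFTC : ∫ s in Set.Iic x, MM' s = MM x - 0 :=
    MeasureTheory.integral_Iic_of_hasDerivAt_of_tendsto'
      (fun s hs => hasDerivAt_MM (le_trans hs (by linarith : x ≤ 0)))
      (MM'_integrableOn hx) MM_tendsto
  have hint_p : IntegrableOn stdPdf (Set.Iic x) := stdPdf_integrable.integrableOn
  have hint_M := MM'_integrableOn hx
  have hdiff_int : IntegrableOn (fun s => MM' s - stdPdf s) (Set.Iic x) := hint_M.sub hint_p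
  have hmono : ∫ s in Set.Ioc (x-1) x, (MM' s - stdPdf s) ≤ ∫ s in Set.Iic x, (MM' s - stdPdf s) := by
    apply MeasureTheory.setIntegral_mono_set hdiff_int
    · filter_upwards [MeasureTheory.ae_restrict_mem measurableSet_Iic] with s hs
      have := pdf_lt_MM' (le_trans hs hx)
      simp only [Pi.zero_apply]; linarith
    · exact Filter.Eventually.of_forall (fun s hs => Set.Ioc_subset_Iic_self hs)
  have hpos : 0 < ∫ s in Set.Ioc (x-1) x, (MM' s - stdPdf s) := by
    rw [← intervalIntegral.integral_of_le (by linarith : x - 1 ≤ x)]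
    apply intervalIntegral.intervalIntegral_pos_of_pos_on
    · rw [intervalIntegrable_iff_integrableOn_Ioc_of_le (by linarith : x - 1 ≤ x)]
      exact hdiff_int.mono_set Set.Ioc_subset_Iic_self
    · intro s hs
      have := pdf_lt_MM' (le_trans hs.2.le hx)
      linarith
    · linarith
  have hsub : ∫ s in Set.Iic x, (MM' s - stdPdf s)
      = (∫ s in Set.Iic x, MM' s) - ∫ s in Set.Iic x, stdPdf s :=
    MeasureTheory.integral_sub hint_M hint_p
  have hlt : stdCdf x < MM x := by
    rw [stdCdf]
    have : ∫ s in Set.Iic x, MM' s = MM x := by rw [hFTC]; ring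
    linarith [hmono, hpos, hsub, this]
  have hd := denom_pos (by linarith : x ≤ 0)
  rw [MM, lt_div_iff₀ hd] at hlt
  exact hlt


lemma hepA0 : ee 0.455 ≤ 0.90166476 := ee_le_of (by norm_num) (by norm_num)
lemma hepA1 : ee 0.475 ≤ 0.89331815 := ee_le_of (by norm_num) (by norm_num)
lemma hepA2 : ee 0.495 ≤ 0.88469485 := ee_le_of (by norm_num) (by norm_num)
lemma hepA3 : ee 0.515 ≤ 0.87580441 := ee_le_of (by norm_num) (by norm_num)
lemma hepA4 : ee 0.535 ≤ 0.86665657 := ee_le_of (by norm_num) (by norm_num)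
lemma hepA5 : ee 0.555 ≤ 0.85726131 := ee_le_of (by norm_num) (by norm_num)
lemma hepA6 : ee 0.575 ≤ 0.84762879 := ee_le_of (by norm_num) (by norm_num)
lemma hepA7 : ee 0.595 ≤ 0.83776933 := ee_le_of (by norm_num) (by norm_num)
lemma hepA8 : ee 0.615 ≤ 0.8276934 := ee_le_of (by norm_num) (by norm_num)
lemma hepA9 : ee 0.635 ≤ 0.81741164 := ee_le_of (by norm_num) (by norm_num)
lemma hepA10 : ee 0.655 ≤ 0.80693476 := ee_le_of (by norm_num) (by norm_num)
lemma hepA11 : ee 0.675 ≤ 0.79627359 := ee_le_of (by norm_num) (by norm_num)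
lemma hepA12 : ee 0.685 ≤ 0.79087731 := ee_le_of (by norm_num) (by norm_num)
lemma hepA13 : ee 0.695 ≤ 0.78543905 := ee_le_of (by norm_num) (by norm_num)
lemma hepA14 : ee 0.705 ≤ 0.77996018 := ee_le_of (by norm_num) (by norm_num)
lemma hepA15 : ee 0.715 ≤ 0.77444209 := ee_le_of (by norm_num) (by norm_num)
lemma hepA16 : ee 0.725 ≤ 0.76888615 := ee_le_of (by norm_num) (by norm_num)
lemma hepA17 : ee 0.735 ≤ 0.76329373 := ee_le_of (by norm_num) (by norm_num)
lemma hepA18 : ee 0.745 ≤ 0.75766623 := ee_le_of (by norm_num) (by norm_num)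
lemma hepA19 : ee 0.755 ≤ 0.75200501 := ee_le_of (by norm_num) (by norm_num)
lemma hepA20 : ee 0.76 ≤ 0.74916219 := ee_le_of (by norm_num) (by norm_num)
lemma hepA21 : ee 0.765 ≤ 0.74631147 := ee_le_of (by norm_num) (by norm_num)
lemma hepA22 : ee 0.77 ≤ 0.743453 := ee_le_of (by norm_num) (by norm_num)
lemma hepA23 : ee 0.775 ≤ 0.74058697 := ee_le_of (by norm_num) (by norm_num)
lemma hepA24 : ee 0.78 ≤ 0.73771354 := ee_le_of (by norm_num) (by norm_num)
lemma hepA25 : ee 0.785 ≤ 0.7348329 := ee_le_of (by norm_num) (by norm_num)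
lemma hepA26 : ee 0.79 ≤ 0.7319452 := ee_le_of (by norm_num) (by norm_num)
lemma hepA27 : ee 0.795 ≤ 0.72905063 := ee_le_of (by norm_num) (by norm_num)
lemma hepA28 : ee 0.8 ≤ 0.72614936 := ee_le_of (by norm_num) (by norm_num)
lemma hepA29 : ee 0.805 ≤ 0.72324155 := ee_le_of (by norm_num) (by norm_num)
lemma hepA30 : ee 0.807 ≤ 0.72207663 := ee_le_of (by norm_num) (by norm_num)
lemma hepA31 : ee 0.809 ≤ 0.72091071 := ee_le_of (by norm_num) (by norm_num)
lemma hepA32 : ee 0.811 ≤ 0.71974379 := ee_le_of (by norm_num) (by norm_num)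
lemma hepA33 : ee 0.813 ≤ 0.71857589 := ee_le_of (by norm_num) (by norm_num)
lemma hepA34 : ee 0.815 ≤ 0.71740701 := ee_le_of (by norm_num) (by norm_num)
lemma hepA35 : ee 0.817 ≤ 0.71623717 := ee_le_of (by norm_num) (by norm_num)
lemma hepA36 : ee 0.819 ≤ 0.71506638 := ee_le_of (by norm_num) (by norm_num)
lemma hepA37 : ee 0.821 ≤ 0.71389464 := ee_le_of (by norm_num) (by norm_num)
lemma hepA38 : ee 0.823 ≤ 0.71272198 := ee_le_of (by norm_num) (by norm_num)
lemma hepA39 : ee 0.825 ≤ 0.71154839 := ee_le_of (by norm_num) (by norm_num)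
lemma hepA40 : ee 0.827 ≤ 0.7103739 := ee_le_of (by norm_num) (by norm_num)
lemma hepA41 : ee 0.829 ≤ 0.70919851 := ee_le_of (by norm_num) (by norm_num)
lemma hepA42 : ee 0.831 ≤ 0.70802223 := ee_le_of (by norm_num) (by norm_num)
lemma hepA43 : ee 0.832 ≤ 0.70743377 := ee_le_of (by norm_num) (by norm_num)
lemma hepA44 : ee 0.833 ≤ 0.70684508 := ee_le_of (by norm_num) (by norm_num)
lemma hepA45 : ee 0.834 ≤ 0.70625618 := ee_le_of (by norm_num) (by norm_num)
lemma hepA46 : ee 0.835 ≤ 0.70566706 := ee_le_of (by norm_num) (by norm_num)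
lemma hepA47 : ee 0.836 ≤ 0.70507773 := ee_le_of (by norm_num) (by norm_num)
lemma hepA48 : ee 0.837 ≤ 0.70448819 := ee_le_of (by norm_num) (by norm_num)
lemma hepA49 : ee 0.838 ≤ 0.70389844 := ee_le_of (by norm_num) (by norm_num)
lemma hepA50 : ee 0.839 ≤ 0.70330847 := ee_le_of (by norm_num) (by norm_num)
lemma hepA51 : ee 0.8395 ≤ 0.70301341 := ee_le_of (by norm_num) (by norm_num)
lemma hepA52 : ee 0.84 ≤ 0.7027183 := ee_le_of (by norm_num) (by norm_num)
lemma hepA53 : ee 0.8405 ≤ 0.70242314 := ee_le_of (by norm_num) (by norm_num)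
lemma hepA54 : ee 0.841 ≤ 0.70212793 := ee_le_of (by norm_num) (by norm_num)
lemma hepA55 : ee 0.8415 ≤ 0.70183266 := ee_le_of (by norm_num) (by norm_num)
lemma hepA56 : ee 0.842 ≤ 0.70153734 := ee_le_of (by norm_num) (by norm_num)
lemma hepA57 : ee 0.8425 ≤ 0.70124197 := ee_le_of (by norm_num) (by norm_num)
lemma hepA58 : ee 0.843 ≤ 0.70094656 := ee_le_of (by norm_num) (by norm_num)
lemma hepA59 : ee 0.8435 ≤ 0.70065109 := ee_le_of (by norm_num) (by norm_num)
lemma hepA60 : ee 0.844 ≤ 0.70035557 := ee_le_of (by norm_num) (by norm_num)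
lemma hepA61 : ee 0.8442 ≤ 0.70023734 := ee_le_of (by norm_num) (by norm_num)
lemma hepA62 : ee 0.8444 ≤ 0.70011911 := ee_le_of (by norm_num) (by norm_num)
lemma hepA63 : ee 0.8446 ≤ 0.70000088 := ee_le_of (by norm_num) (by norm_num)
lemma hepA64 : ee 0.8448 ≤ 0.69988263 := ee_le_of (by norm_num) (by norm_num)
lemma hepA65 : ee 0.845 ≤ 0.69976438 := ee_le_of (by norm_num) (by norm_num)
lemma hepA66 : ee 0.8452 ≤ 0.69964611 := ee_le_of (by norm_num) (by norm_num)
lemma hepA67 : ee 0.8454 ≤ 0.69952784 := ee_le_of (by norm_num) (by norm_num)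
lemma hepA68 : ee 0.8456 ≤ 0.69940956 := ee_le_of (by norm_num) (by norm_num)
lemma hepA69 : ee 0.8458 ≤ 0.69929128 := ee_le_of (by norm_num) (by norm_num)
lemma hepA70 : ee 0.846 ≤ 0.69917298 := ee_le_of (by norm_num) (by norm_num)
lemma hepA71 : ee 0.8462 ≤ 0.69905468 := ee_le_of (by norm_num) (by norm_num)
lemma hepA72 : ee 0.8464 ≤ 0.69893637 := ee_le_of (by norm_num) (by norm_num)
lemma hepA73 : ee 0.8466 ≤ 0.69881805 := ee_le_of (by norm_num) (by norm_num)
lemma hepA74 : ee 0.8467 ≤ 0.69875889 := ee_le_of (by norm_num) (by norm_num)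
lemma hepA75 : ee 0.8468 ≤ 0.69869973 := ee_le_of (by norm_num) (by norm_num)
lemma hepA76 : ee 0.8469 ≤ 0.69864056 := ee_le_of (by norm_num) (by norm_num)
lemma hJpA1 : JJ 0.475 ≤ 0.45772666 := JJ_le_of (by norm_num) (by norm_num) (by norm_num)
lemma hJpA2 : JJ 0.495 ≤ 0.47550724 := JJ_le_of (by norm_num) (by norm_num) (by norm_num)
lemma hJpA3 : JJ 0.515 ≤ 0.49311267 := JJ_le_of (by norm_num) (by norm_num) (by norm_num)
lemma hJpA4 : JJ 0.535 ≤ 0.5105377 := JJ_le_of (by norm_num) (by norm_num) (by norm_num)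
lemma hJpA5 : JJ 0.555 ≤ 0.52777729 := JJ_le_of (by norm_num) (by norm_num) (by norm_num)
lemma hJpA6 : JJ 0.575 ≤ 0.54482659 := JJ_le_of (by norm_num) (by norm_num) (by norm_num)
lemma hJpA7 : JJ 0.595 ≤ 0.56168095 := JJ_le_of (by norm_num) (by norm_num) (by norm_num)
lemma hJpA8 : JJ 0.615 ≤ 0.57833594 := JJ_le_of (by norm_num) (by norm_num) (by norm_num)
lemma hJpA9 : JJ 0.635 ≤ 0.59478735 := JJ_le_of (by norm_num) (by norm_num) (by norm_num)
lemma hJpA10 : JJ 0.655 ≤ 0.61103116 := JJ_le_of (by norm_num) (by norm_num) (by norm_num)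
lemma hJpA11 : JJ 0.675 ≤ 0.62706359 := JJ_le_of (by norm_num) (by norm_num) (by norm_num)
lemma hJpA12 : JJ 0.685 ≤ 0.6349994 := JJ_le_of (by norm_num) (by norm_num) (by norm_num)
lemma hJpA13 : JJ 0.695 ≤ 0.64288106 := JJ_le_of (by norm_num) (by norm_num) (by norm_num)
lemma hJpA14 : JJ 0.705 ≤ 0.65070813 := JJ_le_of (by norm_num) (by norm_num) (by norm_num)
lemma hJpA15 : JJ 0.715 ≤ 0.65848022 := JJ_le_of (by norm_num) (by norm_num) (by norm_num)
lemma hJpA16 : JJ 0.725 ≤ 0.66619695 := JJ_le_of (by norm_num) (by norm_num) (by norm_num)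
lemma hJpA17 : JJ 0.735 ≤ 0.67385795 := JJ_le_of (by norm_num) (by norm_num) (by norm_num)
lemma hJpA18 : JJ 0.745 ≤ 0.68146286 := JJ_le_of (by norm_num) (by norm_num) (by norm_num)
lemma hJpA19 : JJ 0.755 ≤ 0.68901134 := JJ_le_of (by norm_num) (by norm_num) (by norm_num)
lemma hJpA20 : JJ 0.76 ≤ 0.69276432 := JJ_le_of (by norm_num) (by norm_num) (by norm_num)
lemma hJpA21 : JJ 0.765 ≤ 0.69650306 := JJ_le_of (by norm_num) (by norm_num) (by norm_num)
lemma hJpA22 : JJ 0.77 ≤ 0.70022754 := JJ_le_of (by norm_num) (by norm_num) (by norm_num)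
lemma hJpA23 : JJ 0.775 ≤ 0.70393771 := JJ_le_of (by norm_num) (by norm_num) (by norm_num)
lemma hJpA24 : JJ 0.78 ≤ 0.70763354 := JJ_le_of (by norm_num) (by norm_num) (by norm_num)
lemma hJpA25 : JJ 0.785 ≤ 0.71131499 := JJ_le_of (by norm_num) (by norm_num) (by norm_num)
lemma hJpA26 : JJ 0.79 ≤ 0.71498202 := JJ_le_of (by norm_num) (by norm_num) (by norm_num)
lemma hJpA27 : JJ 0.795 ≤ 0.71863461 := JJ_le_of (by norm_num) (by norm_num) (by norm_num)
lemma hJpA28 : JJ 0.8 ≤ 0.72227271 := JJ_le_of (by norm_num) (by norm_num) (by norm_num)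
lemma hJpA29 : JJ 0.805 ≤ 0.7258963 := JJ_le_of (by norm_num) (by norm_num) (by norm_num)
lemma hJpA30 : JJ 0.807 ≤ 0.72734167 := JJ_le_of (by norm_num) (by norm_num) (by norm_num)
lemma hJpA31 : JJ 0.809 ≤ 0.7287847 := JJ_le_of (by norm_num) (by norm_num) (by norm_num)
lemma hJpA32 : JJ 0.811 ≤ 0.7302254 := JJ_le_of (by norm_num) (by norm_num) (by norm_num)
lemma hJpA33 : JJ 0.813 ≤ 0.73166377 := JJ_le_of (by norm_num) (by norm_num) (by norm_num)
lemma hJpA34 : JJ 0.815 ≤ 0.73309981 := JJ_le_of (by norm_num) (by norm_num) (by norm_num)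
lemma hJpA35 : JJ 0.817 ≤ 0.73453351 := JJ_le_of (by norm_num) (by norm_num) (by norm_num)
lemma hJpA36 : JJ 0.819 ≤ 0.73596486 := JJ_le_of (by norm_num) (by norm_num) (by norm_num)
lemma hJpA37 : JJ 0.821 ≤ 0.73739388 := JJ_le_of (by norm_num) (by norm_num) (by norm_num)
lemma hJpA38 : JJ 0.823 ≤ 0.73882056 := JJ_le_of (by norm_num) (by norm_num) (by norm_num)
lemma hJpA39 : JJ 0.825 ≤ 0.74024489 := JJ_le_of (by norm_num) (by norm_num) (by norm_num)
lemma hJpA40 : JJ 0.827 ≤ 0.74166687 := JJ_le_of (by norm_num) (by norm_num) (by norm_num)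
lemma hJpA41 : JJ 0.829 ≤ 0.7430865 := JJ_le_of (by norm_num) (by norm_num) (by norm_num)
lemma hJpA42 : JJ 0.831 ≤ 0.74450379 := JJ_le_of (by norm_num) (by norm_num) (by norm_num)
lemma hJpA43 : JJ 0.832 ≤ 0.74521155 := JJ_le_of (by norm_num) (by norm_num) (by norm_num)
lemma hJpA44 : JJ 0.833 ≤ 0.74591872 := JJ_le_of (by norm_num) (by norm_num) (by norm_num)
lemma hJpA45 : JJ 0.834 ≤ 0.74662531 := JJ_le_of (by norm_num) (by norm_num) (by norm_num)
lemma hJpA46 : JJ 0.835 ≤ 0.74733131 := JJ_le_of (by norm_num) (by norm_num) (by norm_num)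
lemma hJpA47 : JJ 0.836 ≤ 0.74803671 := JJ_le_of (by norm_num) (by norm_num) (by norm_num)
lemma hJpA48 : JJ 0.837 ≤ 0.74874153 := JJ_le_of (by norm_num) (by norm_num) (by norm_num)
lemma hJpA49 : JJ 0.838 ≤ 0.74944576 := JJ_le_of (by norm_num) (by norm_num) (by norm_num)
lemma hJpA50 : JJ 0.839 ≤ 0.7501494 := JJ_le_of (by norm_num) (by norm_num) (by norm_num)
lemma hJpA51 : JJ 0.8395 ≤ 0.750501 := JJ_le_of (by norm_num) (by norm_num) (by norm_num)
lemma hJpA52 : JJ 0.84 ≤ 0.75085245 := JJ_le_of (by norm_num) (by norm_num) (by norm_num)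
lemma hJpA53 : JJ 0.8405 ≤ 0.75120376 := JJ_le_of (by norm_num) (by norm_num) (by norm_num)
lemma hJpA54 : JJ 0.841 ≤ 0.75155491 := JJ_le_of (by norm_num) (by norm_num) (by norm_num)
lemma hJpA55 : JJ 0.8415 ≤ 0.75190592 := JJ_le_of (by norm_num) (by norm_num) (by norm_num)
lemma hJpA56 : JJ 0.842 ≤ 0.75225678 := JJ_le_of (by norm_num) (by norm_num) (by norm_num)
lemma hJpA57 : JJ 0.8425 ≤ 0.7526075 := JJ_le_of (by norm_num) (by norm_num) (by norm_num)
lemma hJpA58 : JJ 0.843 ≤ 0.75295807 := JJ_le_of (by norm_num) (by norm_num) (by norm_num)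
lemma hJpA59 : JJ 0.8435 ≤ 0.75330848 := JJ_le_of (by norm_num) (by norm_num) (by norm_num)
lemma hJpA60 : JJ 0.844 ≤ 0.75365876 := JJ_le_of (by norm_num) (by norm_num) (by norm_num)
lemma hJpA61 : JJ 0.8442 ≤ 0.75379882 := JJ_le_of (by norm_num) (by norm_num) (by norm_num)
lemma hJpA62 : JJ 0.8444 ≤ 0.75393887 := JJ_le_of (by norm_num) (by norm_num) (by norm_num)
lemma hJpA63 : JJ 0.8446 ≤ 0.75407889 := JJ_le_of (by norm_num) (by norm_num) (by norm_num)
lemma hJpA64 : JJ 0.8448 ≤ 0.75421888 := JJ_le_of (by norm_num) (by norm_num) (by norm_num)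
lemma hJpA65 : JJ 0.845 ≤ 0.75435886 := JJ_le_of (by norm_num) (by norm_num) (by norm_num)
lemma hJpA66 : JJ 0.8452 ≤ 0.7544988 := JJ_le_of (by norm_num) (by norm_num) (by norm_num)
lemma hJpA67 : JJ 0.8454 ≤ 0.75463873 := JJ_le_of (by norm_num) (by norm_num) (by norm_num)
lemma hJpA68 : JJ 0.8456 ≤ 0.75477863 := JJ_le_of (by norm_num) (by norm_num) (by norm_num)
lemma hJpA69 : JJ 0.8458 ≤ 0.75491851 := JJ_le_of (by norm_num) (by norm_num) (by norm_num)
lemma hJpA70 : JJ 0.846 ≤ 0.75505836 := JJ_le_of (by norm_num) (by norm_num) (by norm_num)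
lemma hJpA71 : JJ 0.8462 ≤ 0.7551982 := JJ_le_of (by norm_num) (by norm_num) (by norm_num)
lemma hJpA72 : JJ 0.8464 ≤ 0.755338 := JJ_le_of (by norm_num) (by norm_num) (by norm_num)
lemma hJpA73 : JJ 0.8466 ≤ 0.75547779 := JJ_le_of (by norm_num) (by norm_num) (by norm_num)
lemma hJpA74 : JJ 0.8467 ≤ 0.75554767 := JJ_le_of (by norm_num) (by norm_num) (by norm_num)
lemma hJpA75 : JJ 0.8468 ≤ 0.75561755 := JJ_le_of (by norm_num) (by norm_num) (by norm_num)
lemma hJpA76 : JJ 0.8469 ≤ 0.75568742 := JJ_le_of (by norm_num) (by norm_num) (by norm_num)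
lemma hJpA77 : JJ 0.847 ≤ 0.75575728 := JJ_le_of (by norm_num) (by norm_num) (by norm_num)
lemma hJloB0 : (0.75784436:ℝ) ≤ JJ 0.85 := le_JJ_of (by norm_num) (by norm_num) (by norm_num)
lemma hJloB1 : (0.75791403:ℝ) ≤ JJ 0.8501 := le_JJ_of (by norm_num) (by norm_num) (by norm_num)
lemma hJloB2 : (0.7579837:ℝ) ≤ JJ 0.8502 := le_JJ_of (by norm_num) (by norm_num) (by norm_num)
lemma hJloB3 : (0.75812301:ℝ) ≤ JJ 0.8504 := le_JJ_of (by norm_num) (by norm_num) (by norm_num)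
lemma hJloB4 : (0.7582623:ℝ) ≤ JJ 0.8506 := le_JJ_of (by norm_num) (by norm_num) (by norm_num)
lemma hJloB5 : (0.75840157:ℝ) ≤ JJ 0.8508 := le_JJ_of (by norm_num) (by norm_num) (by norm_num)
lemma hJloB6 : (0.75854082:ℝ) ≤ JJ 0.851 := le_JJ_of (by norm_num) (by norm_num) (by norm_num)
lemma hJloB7 : (0.75868004:ℝ) ≤ JJ 0.8512 := le_JJ_of (by norm_num) (by norm_num) (by norm_num)
lemma hJloB8 : (0.75881923:ℝ) ≤ JJ 0.8514 := le_JJ_of (by norm_num) (by norm_num) (by norm_num)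
lemma hJloB9 : (0.75895841:ℝ) ≤ JJ 0.8516 := le_JJ_of (by norm_num) (by norm_num) (by norm_num)
lemma hJloB10 : (0.75909756:ℝ) ≤ JJ 0.8518 := le_JJ_of (by norm_num) (by norm_num) (by norm_num)
lemma hJloB11 : (0.75923668:ℝ) ≤ JJ 0.852 := le_JJ_of (by norm_num) (by norm_num) (by norm_num)
lemma hJloB12 : (0.75937578:ℝ) ≤ JJ 0.8522 := le_JJ_of (by norm_num) (by norm_num) (by norm_num)
lemma hJloB13 : (0.75951486:ℝ) ≤ JJ 0.8524 := le_JJ_of (by norm_num) (by norm_num) (by norm_num)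
lemma hJloB14 : (0.75965392:ℝ) ≤ JJ 0.8526 := le_JJ_of (by norm_num) (by norm_num) (by norm_num)
lemma hJloB15 : (0.75979295:ℝ) ≤ JJ 0.8528 := le_JJ_of (by norm_num) (by norm_num) (by norm_num)
lemma hJloB16 : (0.75993195:ℝ) ≤ JJ 0.853 := le_JJ_of (by norm_num) (by norm_num) (by norm_num)
lemma hJloB17 : (0.76027937:ℝ) ≤ JJ 0.8535 := le_JJ_of (by norm_num) (by norm_num) (by norm_num)
lemma hJloB18 : (0.76062663:ℝ) ≤ JJ 0.854 := le_JJ_of (by norm_num) (by norm_num) (by norm_num)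
lemma hJloB19 : (0.76097375:ℝ) ≤ JJ 0.8545 := le_JJ_of (by norm_num) (by norm_num) (by norm_num)
lemma hJloB20 : (0.76132072:ℝ) ≤ JJ 0.855 := le_JJ_of (by norm_num) (by norm_num) (by norm_num)
lemma hJloB21 : (0.76166754:ℝ) ≤ JJ 0.8555 := le_JJ_of (by norm_num) (by norm_num) (by norm_num)
lemma hJloB22 : (0.76201421:ℝ) ≤ JJ 0.856 := le_JJ_of (by norm_num) (by norm_num) (by norm_num)
lemma hJloB23 : (0.76236073:ℝ) ≤ JJ 0.8565 := le_JJ_of (by norm_num) (by norm_num) (by norm_num)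
lemma hJloB24 : (0.7627071:ℝ) ≤ JJ 0.857 := le_JJ_of (by norm_num) (by norm_num) (by norm_num)
lemma hJloB25 : (0.76305333:ℝ) ≤ JJ 0.8575 := le_JJ_of (by norm_num) (by norm_num) (by norm_num)
lemma hJloB26 : (0.76339941:ℝ) ≤ JJ 0.858 := le_JJ_of (by norm_num) (by norm_num) (by norm_num)
lemma hJloB27 : (0.76409111:ℝ) ≤ JJ 0.859 := le_JJ_of (by norm_num) (by norm_num) (by norm_num)
lemma hJloB28 : (0.76478223:ℝ) ≤ JJ 0.86 := le_JJ_of (by norm_num) (by norm_num) (by norm_num)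
lemma hJloB29 : (0.76547274:ℝ) ≤ JJ 0.861 := le_JJ_of (by norm_num) (by norm_num) (by norm_num)
lemma hJloB30 : (0.76616267:ℝ) ≤ JJ 0.862 := le_JJ_of (by norm_num) (by norm_num) (by norm_num)
lemma hJloB31 : (0.76685199:ℝ) ≤ JJ 0.863 := le_JJ_of (by norm_num) (by norm_num) (by norm_num)
lemma hJloB32 : (0.76754073:ℝ) ≤ JJ 0.864 := le_JJ_of (by norm_num) (by norm_num) (by norm_num)
lemma hJloB33 : (0.76822886:ℝ) ≤ JJ 0.865 := le_JJ_of (by norm_num) (by norm_num) (by norm_num)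
lemma hJloB34 : (0.7689164:ℝ) ≤ JJ 0.866 := le_JJ_of (by norm_num) (by norm_num) (by norm_num)
lemma hJloB35 : (0.76960335:ℝ) ≤ JJ 0.867 := le_JJ_of (by norm_num) (by norm_num) (by norm_num)
lemma hJloB36 : (0.77097545:ℝ) ≤ JJ 0.869 := le_JJ_of (by norm_num) (by norm_num) (by norm_num)
lemma hJloB37 : (0.77234516:ℝ) ≤ JJ 0.871 := le_JJ_of (by norm_num) (by norm_num) (by norm_num)
lemma hJloB38 : (0.77371248:ℝ) ≤ JJ 0.873 := le_JJ_of (by norm_num) (by norm_num) (by norm_num)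
lemma hJloB39 : (0.77507742:ℝ) ≤ JJ 0.875 := le_JJ_of (by norm_num) (by norm_num) (by norm_num)
lemma hJloB40 : (0.77643996:ℝ) ≤ JJ 0.877 := le_JJ_of (by norm_num) (by norm_num) (by norm_num)
lemma hJloB41 : (0.77780012:ℝ) ≤ JJ 0.879 := le_JJ_of (by norm_num) (by norm_num) (by norm_num)
lemma hJloB42 : (0.77915788:ℝ) ≤ JJ 0.881 := le_JJ_of (by norm_num) (by norm_num) (by norm_num)
lemma hJloB43 : (0.78051324:ℝ) ≤ JJ 0.883 := le_JJ_of (by norm_num) (by norm_num) (by norm_num)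
lemma hJloB44 : (0.78186621:ℝ) ≤ JJ 0.885 := le_JJ_of (by norm_num) (by norm_num) (by norm_num)
lemma hJloB45 : (0.78321678:ℝ) ≤ JJ 0.887 := le_JJ_of (by norm_num) (by norm_num) (by norm_num)
lemma hJloB46 : (0.78456496:ℝ) ≤ JJ 0.889 := le_JJ_of (by norm_num) (by norm_num) (by norm_num)
lemma hJloB47 : (0.78591073:ℝ) ≤ JJ 0.891 := le_JJ_of (by norm_num) (by norm_num) (by norm_num)
lemma hJloB48 : (0.7872541:ℝ) ≤ JJ 0.893 := le_JJ_of (by norm_num) (by norm_num) (by norm_num)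
lemma hJloB49 : (0.78859507:ℝ) ≤ JJ 0.895 := le_JJ_of (by norm_num) (by norm_num) (by norm_num)
lemma hJloB50 : (0.79193698:ℝ) ≤ JJ 0.9 := le_JJ_of (by norm_num) (by norm_num) (by norm_num)
lemma hJloB51 : (0.79526385:ℝ) ≤ JJ 0.905 := le_JJ_of (by norm_num) (by norm_num) (by norm_num)
lemma hJloB52 : (0.79857566:ℝ) ≤ JJ 0.91 := le_JJ_of (by norm_num) (by norm_num) (by norm_num)
lemma hJloB53 : (0.80187239:ℝ) ≤ JJ 0.915 := le_JJ_of (by norm_num) (by norm_num) (by norm_num)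
lemma hJloB54 : (0.80515404:ℝ) ≤ JJ 0.92 := le_JJ_of (by norm_num) (by norm_num) (by norm_num)
lemma hJloB55 : (0.80842058:ℝ) ≤ JJ 0.925 := le_JJ_of (by norm_num) (by norm_num) (by norm_num)
lemma hJloB56 : (0.811672:ℝ) ≤ JJ 0.93 := le_JJ_of (by norm_num) (by norm_num) (by norm_num)
lemma hJloB57 : (0.81490828:ℝ) ≤ JJ 0.935 := le_JJ_of (by norm_num) (by norm_num) (by norm_num)
lemma hJloB58 : (0.81812942:ℝ) ≤ JJ 0.94 := le_JJ_of (by norm_num) (by norm_num) (by norm_num)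
lemma hJloB59 : (0.8245262:ℝ) ≤ JJ 0.95 := le_JJ_of (by norm_num) (by norm_num) (by norm_num)
lemma hJloB60 : (0.83086225:ℝ) ≤ JJ 0.96 := le_JJ_of (by norm_num) (by norm_num) (by norm_num)
lemma hJloB61 : (0.83713747:ℝ) ≤ JJ 0.97 := le_JJ_of (by norm_num) (by norm_num) (by norm_num)
lemma hJloB62 : (0.84335179:ℝ) ≤ JJ 0.98 := le_JJ_of (by norm_num) (by norm_num) (by norm_num)
lemma hJloB63 : (0.84950516:ℝ) ≤ JJ 0.99 := le_JJ_of (by norm_num) (by norm_num) (by norm_num)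
lemma hJloB64 : (0.8555975:ℝ) ≤ JJ 1 := le_JJ_of (by norm_num) (by norm_num) (by norm_num)
lemma hJloB65 : (0.86162877:ℝ) ≤ JJ 1.01 := le_JJ_of (by norm_num) (by norm_num) (by norm_num)
lemma hJloB66 : (0.86759892:ℝ) ≤ JJ 1.02 := le_JJ_of (by norm_num) (by norm_num) (by norm_num)
lemma hJloB67 : (0.87350793:ℝ) ≤ JJ 1.03 := le_JJ_of (by norm_num) (by norm_num) (by norm_num)
lemma hJloB68 : (0.87935576:ℝ) ≤ JJ 1.04 := le_JJ_of (by norm_num) (by norm_num) (by norm_num)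
lemma hJloB69 : (0.89086779:ℝ) ≤ JJ 1.06 := le_JJ_of (by norm_num) (by norm_num) (by norm_num)
lemma hJloB70 : (0.90213489:ℝ) ≤ JJ 1.08 := le_JJ_of (by norm_num) (by norm_num) (by norm_num)
lemma hJloB71 : (0.91315698:ℝ) ≤ JJ 1.1 := le_JJ_of (by norm_num) (by norm_num) (by norm_num)
lemma hJloB72 : (0.92393403:ℝ) ≤ JJ 1.12 := le_JJ_of (by norm_num) (by norm_num) (by norm_num)
lemma hJloB73 : (0.93446598:ℝ) ≤ JJ 1.14 := le_JJ_of (by norm_num) (by norm_num) (by norm_num)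
lemma hJloB74 : (0.94475274:ℝ) ≤ JJ 1.16 := le_JJ_of (by norm_num) (by norm_num) (by norm_num)
lemma hJloB75 : (0.95479417:ℝ) ≤ JJ 1.18 := le_JJ_of (by norm_num) (by norm_num) (by norm_num)
lemma hJloB76 : (0.96458997:ℝ) ≤ JJ 1.2 := le_JJ_of (by norm_num) (by norm_num) (by norm_num)
lemma hJloB77 : (0.97413968:ℝ) ≤ JJ 1.22 := le_JJ_of (by norm_num) (by norm_num) (by norm_num)
lemma hJloB78 : (0.9834426:ℝ) ≤ JJ 1.24 := le_JJ_of (by norm_num) (by norm_num) (by norm_num)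
lemma hJloB79 : (0.99249775:ℝ) ≤ JJ 1.26 := le_JJ_of (by norm_num) (by norm_num) (by norm_num)
lemma hJloB80 : (1.00130374:ℝ) ≤ JJ 1.28 := le_JJ_of (by norm_num) (by norm_num) (by norm_num)
lemma hJloB81 : (1.00985875:ℝ) ≤ JJ 1.3 := le_JJ_of (by norm_num) (by norm_num) (by norm_num)
lemma hJloB82 : (1.01816039:ℝ) ≤ JJ 1.32 := le_JJ_of (by norm_num) (by norm_num) (by norm_num)
lemma hJloB83 : (1.0262056:ℝ) ≤ JJ 1.34 := le_JJ_of (by norm_num) (by norm_num) (by norm_num)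
lemma hJloB84 : (1.03399056:ℝ) ≤ JJ 1.36 := le_JJ_of (by norm_num) (by norm_num) (by norm_num)
lemma hJloB85 : (1.04151052:ℝ) ≤ JJ 1.38 := le_JJ_of (by norm_num) (by norm_num) (by norm_num)
lemma hJhiB1 : JJ 0.8501 ≤ 0.75792017 := JJ_le_of (by norm_num) (by norm_num) (by norm_num)
lemma heloB1 : (0.696739:ℝ) ≤ ee 0.8501 := le_ee_of (by norm_num) (by norm_num)
lemma hJhiB2 : JJ 0.8502 ≤ 0.75798985 := JJ_le_of (by norm_num) (by norm_num) (by norm_num)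
lemma heloB2 : (0.69667976:ℝ) ≤ ee 0.8502 := le_ee_of (by norm_num) (by norm_num)
lemma hJhiB3 : JJ 0.8504 ≤ 0.75812918 := JJ_le_of (by norm_num) (by norm_num) (by norm_num)
lemma heloB3 : (0.69656127:ℝ) ≤ ee 0.8504 := le_ee_of (by norm_num) (by norm_num)
lemma hJhiB4 : JJ 0.8506 ≤ 0.75826849 := JJ_le_of (by norm_num) (by norm_num) (by norm_num)
lemma heloB4 : (0.69644277:ℝ) ≤ ee 0.8506 := le_ee_of (by norm_num) (by norm_num)
lemma hJhiB5 : JJ 0.8508 ≤ 0.75840778 := JJ_le_of (by norm_num) (by norm_num) (by norm_num)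
lemma heloB5 : (0.69632427:ℝ) ≤ ee 0.8508 := le_ee_of (by norm_num) (by norm_num)
lemma hJhiB6 : JJ 0.851 ≤ 0.75854704 := JJ_le_of (by norm_num) (by norm_num) (by norm_num)
lemma heloB6 : (0.69620576:ℝ) ≤ ee 0.851 := le_ee_of (by norm_num) (by norm_num)
lemma hJhiB7 : JJ 0.8512 ≤ 0.75868628 := JJ_le_of (by norm_num) (by norm_num) (by norm_num)
lemma heloB7 : (0.69608724:ℝ) ≤ ee 0.8512 := le_ee_of (by norm_num) (by norm_num)
lemma hJhiB8 : JJ 0.8514 ≤ 0.7588255 := JJ_le_of (by norm_num) (by norm_num) (by norm_num)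
lemma heloB8 : (0.69596872:ℝ) ≤ ee 0.8514 := le_ee_of (by norm_num) (by norm_num)
lemma hJhiB9 : JJ 0.8516 ≤ 0.75896469 := JJ_le_of (by norm_num) (by norm_num) (by norm_num)
lemma heloB9 : (0.69585019:ℝ) ≤ ee 0.8516 := le_ee_of (by norm_num) (by norm_num)
lemma hJhiB10 : JJ 0.8518 ≤ 0.75910386 := JJ_le_of (by norm_num) (by norm_num) (by norm_num)
lemma heloB10 : (0.69573164:ℝ) ≤ ee 0.8518 := le_ee_of (by norm_num) (by norm_num)
lemma hJhiB11 : JJ 0.852 ≤ 0.759243 := JJ_le_of (by norm_num) (by norm_num) (by norm_num)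
lemma heloB11 : (0.6956131:ℝ) ≤ ee 0.852 := le_ee_of (by norm_num) (by norm_num)
lemma hJhiB12 : JJ 0.8522 ≤ 0.75938213 := JJ_le_of (by norm_num) (by norm_num) (by norm_num)
lemma heloB12 : (0.69549454:ℝ) ≤ ee 0.8522 := le_ee_of (by norm_num) (by norm_num)
lemma hJhiB13 : JJ 0.8524 ≤ 0.75952122 := JJ_le_of (by norm_num) (by norm_num) (by norm_num)
lemma heloB13 : (0.69537598:ℝ) ≤ ee 0.8524 := le_ee_of (by norm_num) (by norm_num)
lemma hJhiB14 : JJ 0.8526 ≤ 0.7596603 := JJ_le_of (by norm_num) (by norm_num) (by norm_num)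
lemma heloB14 : (0.6952574:ℝ) ≤ ee 0.8526 := le_ee_of (by norm_num) (by norm_num)
lemma hJhiB15 : JJ 0.8528 ≤ 0.75979935 := JJ_le_of (by norm_num) (by norm_num) (by norm_num)
lemma heloB15 : (0.69513882:ℝ) ≤ ee 0.8528 := le_ee_of (by norm_num) (by norm_num)
lemma hJhiB16 : JJ 0.853 ≤ 0.75993837 := JJ_le_of (by norm_num) (by norm_num) (by norm_num)
lemma heloB16 : (0.69502024:ℝ) ≤ ee 0.853 := le_ee_of (by norm_num) (by norm_num)
lemma hJhiB17 : JJ 0.8535 ≤ 0.76028584 := JJ_le_of (by norm_num) (by norm_num) (by norm_num)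
lemma heloB17 : (0.69472374:ℝ) ≤ ee 0.8535 := le_ee_of (by norm_num) (by norm_num)
lemma hJhiB18 : JJ 0.854 ≤ 0.76063315 := JJ_le_of (by norm_num) (by norm_num) (by norm_num)
lemma heloB18 : (0.69442719:ℝ) ≤ ee 0.854 := le_ee_of (by norm_num) (by norm_num)
lemma hJhiB19 : JJ 0.8545 ≤ 0.76098032 := JJ_le_of (by norm_num) (by norm_num) (by norm_num)
lemma heloB19 : (0.69413059:ℝ) ≤ ee 0.8545 := le_ee_of (by norm_num) (by norm_num)
lemma hJhiB20 : JJ 0.855 ≤ 0.76132733 := JJ_le_of (by norm_num) (by norm_num) (by norm_num)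
lemma heloB20 : (0.69383395:ℝ) ≤ ee 0.855 := le_ee_of (by norm_num) (by norm_num)
lemma hJhiB21 : JJ 0.8555 ≤ 0.7616742 := JJ_le_of (by norm_num) (by norm_num) (by norm_num)
lemma heloB21 : (0.69353726:ℝ) ≤ ee 0.8555 := le_ee_of (by norm_num) (by norm_num)
lemma hJhiB22 : JJ 0.856 ≤ 0.76202093 := JJ_le_of (by norm_num) (by norm_num) (by norm_num)
lemma heloB22 : (0.69324052:ℝ) ≤ ee 0.856 := le_ee_of (by norm_num) (by norm_num)
lemma hJhiB23 : JJ 0.8565 ≤ 0.7623675 := JJ_le_of (by norm_num) (by norm_num) (by norm_num)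
lemma heloB23 : (0.69294374:ℝ) ≤ ee 0.8565 := le_ee_of (by norm_num) (by norm_num)
lemma hJhiB24 : JJ 0.857 ≤ 0.76271393 := JJ_le_of (by norm_num) (by norm_num) (by norm_num)
lemma heloB24 : (0.69264691:ℝ) ≤ ee 0.857 := le_ee_of (by norm_num) (by norm_num)
lemma hJhiB25 : JJ 0.8575 ≤ 0.7630602 := JJ_le_of (by norm_num) (by norm_num) (by norm_num)
lemma heloB25 : (0.69235004:ℝ) ≤ ee 0.8575 := le_ee_of (by norm_num) (by norm_num)
lemma hJhiB26 : JJ 0.858 ≤ 0.76340633 := JJ_le_of (by norm_num) (by norm_num) (by norm_num)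
lemma heloB26 : (0.69205312:ℝ) ≤ ee 0.858 := le_ee_of (by norm_num) (by norm_num)
lemma hJhiB27 : JJ 0.859 ≤ 0.76409814 := JJ_le_of (by norm_num) (by norm_num) (by norm_num)
lemma heloB27 : (0.69145913:ℝ) ≤ ee 0.859 := le_ee_of (by norm_num) (by norm_num)
lemma hJhiB28 : JJ 0.86 ≤ 0.76478936 := JJ_le_of (by norm_num) (by norm_num) (by norm_num)
lemma heloB28 : (0.69086497:ℝ) ≤ ee 0.86 := le_ee_of (by norm_num) (by norm_num)
lemma hJhiB29 : JJ 0.861 ≤ 0.76547999 := JJ_le_of (by norm_num) (by norm_num) (by norm_num)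
lemma heloB29 : (0.69027062:ℝ) ≤ ee 0.861 := le_ee_of (by norm_num) (by norm_num)
lemma hJhiB30 : JJ 0.862 ≤ 0.76617002 := JJ_le_of (by norm_num) (by norm_num) (by norm_num)
lemma heloB30 : (0.6896761:ℝ) ≤ ee 0.862 := le_ee_of (by norm_num) (by norm_num)
lemma hJhiB31 : JJ 0.863 ≤ 0.76685946 := JJ_le_of (by norm_num) (by norm_num) (by norm_num)
lemma heloB31 : (0.6890814:ℝ) ≤ ee 0.863 := le_ee_of (by norm_num) (by norm_num)
lemma hJhiB32 : JJ 0.864 ≤ 0.76754831 := JJ_le_of (by norm_num) (by norm_num) (by norm_num)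
lemma heloB32 : (0.68848651:ℝ) ≤ ee 0.864 := le_ee_of (by norm_num) (by norm_num)
lemma hJhiB33 : JJ 0.865 ≤ 0.76823656 := JJ_le_of (by norm_num) (by norm_num) (by norm_num)
lemma heloB33 : (0.68789146:ℝ) ≤ ee 0.865 := le_ee_of (by norm_num) (by norm_num)
lemma hJhiB34 : JJ 0.866 ≤ 0.76892421 := JJ_le_of (by norm_num) (by norm_num) (by norm_num)
lemma heloB34 : (0.68729623:ℝ) ≤ ee 0.866 := le_ee_of (by norm_num) (by norm_num)
lemma hJhiB35 : JJ 0.867 ≤ 0.76961128 := JJ_le_of (by norm_num) (by norm_num) (by norm_num)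
lemma heloB35 : (0.68670082:ℝ) ≤ ee 0.867 := le_ee_of (by norm_num) (by norm_num)
lemma hJhiB36 : JJ 0.869 ≤ 0.77098362 := JJ_le_of (by norm_num) (by norm_num) (by norm_num)
lemma heloB36 : (0.6855095:ℝ) ≤ ee 0.869 := le_ee_of (by norm_num) (by norm_num)
lemma hJhiB37 : JJ 0.871 ≤ 0.77235358 := JJ_le_of (by norm_num) (by norm_num) (by norm_num)
lemma heloB37 : (0.6843175:ℝ) ≤ ee 0.871 := le_ee_of (by norm_num) (by norm_num)
lemma hJhiB38 : JJ 0.873 ≤ 0.77372116 := JJ_le_of (by norm_num) (by norm_num) (by norm_num)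
lemma heloB38 : (0.68312483:ℝ) ≤ ee 0.873 := le_ee_of (by norm_num) (by norm_num)
lemma hJhiB39 : JJ 0.875 ≤ 0.77508635 := JJ_le_of (by norm_num) (by norm_num) (by norm_num)
lemma heloB39 : (0.6819315:ℝ) ≤ ee 0.875 := le_ee_of (by norm_num) (by norm_num)
lemma hJhiB40 : JJ 0.877 ≤ 0.77644917 := JJ_le_of (by norm_num) (by norm_num) (by norm_num)
lemma heloB40 : (0.68073753:ℝ) ≤ ee 0.877 := le_ee_of (by norm_num) (by norm_num)
lemma hJhiB41 : JJ 0.879 ≤ 0.7778096 := JJ_le_of (by norm_num) (by norm_num) (by norm_num)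
lemma heloB41 : (0.67954293:ℝ) ≤ ee 0.879 := le_ee_of (by norm_num) (by norm_num)
lemma hJhiB42 : JJ 0.881 ≤ 0.77916764 := JJ_le_of (by norm_num) (by norm_num) (by norm_num)
lemma heloB42 : (0.6783477:ℝ) ≤ ee 0.881 := le_ee_of (by norm_num) (by norm_num)
lemma hJhiB43 : JJ 0.883 ≤ 0.7805233 := JJ_le_of (by norm_num) (by norm_num) (by norm_num)
lemma heloB43 : (0.67715186:ℝ) ≤ ee 0.883 := le_ee_of (by norm_num) (by norm_num)
lemma hJhiB44 : JJ 0.885 ≤ 0.78187657 := JJ_le_of (by norm_num) (by norm_num) (by norm_num)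
lemma heloB44 : (0.67595541:ℝ) ≤ ee 0.885 := le_ee_of (by norm_num) (by norm_num)
lemma hJhiB45 : JJ 0.887 ≤ 0.78322745 := JJ_le_of (by norm_num) (by norm_num) (by norm_num)
lemma heloB45 : (0.67475837:ℝ) ≤ ee 0.887 := le_ee_of (by norm_num) (by norm_num)
lemma hJhiB46 : JJ 0.889 ≤ 0.78457594 := JJ_le_of (by norm_num) (by norm_num) (by norm_num)
lemma heloB46 : (0.67356074:ℝ) ≤ ee 0.889 := le_ee_of (by norm_num) (by norm_num)
lemma hJhiB47 : JJ 0.891 ≤ 0.78592203 := JJ_le_of (by norm_num) (by norm_num) (by norm_num)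
lemma heloB47 : (0.67236255:ℝ) ≤ ee 0.891 := le_ee_of (by norm_num) (by norm_num)
lemma hJhiB48 : JJ 0.893 ≤ 0.78726574 := JJ_le_of (by norm_num) (by norm_num) (by norm_num)
lemma heloB48 : (0.67116379:ℝ) ≤ ee 0.893 := le_ee_of (by norm_num) (by norm_num)
lemma hJhiB49 : JJ 0.895 ≤ 0.78860705 := JJ_le_of (by norm_num) (by norm_num) (by norm_num)
lemma heloB49 : (0.66996448:ℝ) ≤ ee 0.895 := le_ee_of (by norm_num) (by norm_num)
lemma hJhiB50 : JJ 0.9 ≤ 0.79194986 := JJ_le_of (by norm_num) (by norm_num) (by norm_num)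
lemma heloB50 : (0.66696386:ℝ) ≤ ee 0.9 := le_ee_of (by norm_num) (by norm_num)
lemma hJhiB51 : JJ 0.905 ≤ 0.79527769 := JJ_le_of (by norm_num) (by norm_num) (by norm_num)
lemma heloB51 : (0.66396003:ℝ) ≤ ee 0.905 := le_ee_of (by norm_num) (by norm_num)
lemma hJhiB52 : JJ 0.91 ≤ 0.79859053 := JJ_le_of (by norm_num) (by norm_num) (by norm_num)
lemma heloB52 : (0.66095313:ℝ) ≤ ee 0.91 := le_ee_of (by norm_num) (by norm_num)
lemma hJhiB53 : JJ 0.915 ≤ 0.80188836 := JJ_le_of (by norm_num) (by norm_num) (by norm_num)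
lemma heloB53 : (0.65794333:ℝ) ≤ ee 0.915 := le_ee_of (by norm_num) (by norm_num)
lemma hJhiB54 : JJ 0.92 ≤ 0.80517118 := JJ_le_of (by norm_num) (by norm_num) (by norm_num)
lemma heloB54 : (0.6549308:ℝ) ≤ ee 0.92 := le_ee_of (by norm_num) (by norm_num)
lemma hJhiB55 : JJ 0.925 ≤ 0.80843897 := JJ_le_of (by norm_num) (by norm_num) (by norm_num)
lemma heloB55 : (0.65191568:ℝ) ≤ ee 0.925 := le_ee_of (by norm_num) (by norm_num)
lemma hJhiB56 : JJ 0.93 ≤ 0.81169172 := JJ_le_of (by norm_num) (by norm_num) (by norm_num)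
lemma heloB56 : (0.64889814:ℝ) ≤ ee 0.93 := le_ee_of (by norm_num) (by norm_num)
lemma hJhiB57 : JJ 0.935 ≤ 0.81492943 := JJ_le_of (by norm_num) (by norm_num) (by norm_num)
lemma heloB57 : (0.64587834:ℝ) ≤ ee 0.935 := le_ee_of (by norm_num) (by norm_num)
lemma hJhiB58 : JJ 0.94 ≤ 0.81815208 := JJ_le_of (by norm_num) (by norm_num) (by norm_num)
lemma heloB58 : (0.64285643:ℝ) ≤ ee 0.94 := le_ee_of (by norm_num) (by norm_num)
lemma hJhiB59 : JJ 0.95 ≤ 0.82455221 := JJ_le_of (by norm_num) (by norm_num) (by norm_num)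
lemma heloB59 : (0.63680692:ℝ) ≤ ee 0.95 := le_ee_of (by norm_num) (by norm_num)
lemma hJhiB60 : JJ 0.96 ≤ 0.83089204 := JJ_le_of (by norm_num) (by norm_num) (by norm_num)
lemma heloB60 : (0.63075083:ℝ) ≤ ee 0.96 := le_ee_of (by norm_num) (by norm_num)
lemma hJhiB61 : JJ 0.97 ≤ 0.83717156 := JJ_le_of (by norm_num) (by norm_num) (by norm_num)
lemma heloB61 : (0.62468941:ℝ) ≤ ee 0.97 := le_ee_of (by norm_num) (by norm_num)
lemma hJhiB62 : JJ 0.98 ≤ 0.84339074 := JJ_le_of (by norm_num) (by norm_num) (by norm_num)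
lemma heloB62 : (0.61862385:ℝ) ≤ ee 0.98 := le_ee_of (by norm_num) (by norm_num)
lemma hJhiB63 : JJ 0.99 ≤ 0.8495496 := JJ_le_of (by norm_num) (by norm_num) (by norm_num)
lemma heloB63 : (0.61255535:ℝ) ≤ ee 0.99 := le_ee_of (by norm_num) (by norm_num)
lemma hJhiB64 : JJ 1 ≤ 0.85564814 := JJ_le_of (by norm_num) (by norm_num) (by norm_num)
lemma heloB64 : (0.60648509:ℝ) ≤ ee 1 := le_ee_of (by norm_num) (by norm_num)
lemma hJhiB65 : JJ 1.01 ≤ 0.86168641 := JJ_le_of (by norm_num) (by norm_num) (by norm_num)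
lemma heloB65 : (0.60041424:ℝ) ≤ ee 1.01 := le_ee_of (by norm_num) (by norm_num)
lemma hJhiB66 : JJ 1.02 ≤ 0.86766444 := JJ_le_of (by norm_num) (by norm_num) (by norm_num)
lemma heloB66 : (0.59434394:ℝ) ≤ ee 1.02 := le_ee_of (by norm_num) (by norm_num)
lemma hJhiB67 : JJ 1.03 ≤ 0.8735823 := JJ_le_of (by norm_num) (by norm_num) (by norm_num)
lemma heloB67 : (0.58827531:ℝ) ≤ ee 1.03 := le_ee_of (by norm_num) (by norm_num)
lemma hJhiB68 : JJ 1.04 ≤ 0.87944008 := JJ_le_of (by norm_num) (by norm_num) (by norm_num)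
lemma heloB68 : (0.58220947:ℝ) ≤ ee 1.04 := le_ee_of (by norm_num) (by norm_num)
lemma hJhiB69 : JJ 1.06 ≤ 0.8909758 := JJ_le_of (by norm_num) (by norm_num) (by norm_num)
lemma heloB69 : (0.57009047:ℝ) ≤ ee 1.06 := le_ee_of (by norm_num) (by norm_num)
lemma hJhiB70 : JJ 1.08 ≤ 0.90227261 := JJ_le_of (by norm_num) (by norm_num) (by norm_num)
lemma heloB70 : (0.55799539:ℝ) ≤ ee 1.08 := le_ee_of (by norm_num) (by norm_num)
lemma hJhiB71 : JJ 1.1 ≤ 0.91333181 := JJ_le_of (by norm_num) (by norm_num) (by norm_num)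
lemma heloB71 : (0.54593232:ℝ) ≤ ee 1.1 := le_ee_of (by norm_num) (by norm_num)
lemma hJhiB72 : JJ 1.12 ≤ 0.92415499 := JJ_le_of (by norm_num) (by norm_num) (by norm_num)
lemma heloB72 : (0.53390898:ℝ) ≤ ee 1.12 := le_ee_of (by norm_num) (by norm_num)
lemma hJhiB73 : JJ 1.14 ≤ 0.9347441 := JJ_le_of (by norm_num) (by norm_num) (by norm_num)
lemma heloB73 : (0.52193263:ℝ) ≤ ee 1.14 := le_ee_of (by norm_num) (by norm_num)
lemma hJhiB74 : JJ 1.16 ≤ 0.94510143 := JJ_le_of (by norm_num) (by norm_num) (by norm_num)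
lemma heloB74 : (0.5100101:ℝ) ≤ ee 1.16 := le_ee_of (by norm_num) (by norm_num)
lemma hJhiB75 : JJ 1.18 ≤ 0.95522962 := JJ_le_of (by norm_num) (by norm_num) (by norm_num)
lemma heloB75 : (0.49814771:ℝ) ≤ ee 1.18 := le_ee_of (by norm_num) (by norm_num)
lemma hJhiB76 : JJ 1.2 ≤ 0.96513176 := JJ_le_of (by norm_num) (by norm_num) (by norm_num)
lemma heloB76 : (0.48635126:ℝ) ≤ ee 1.2 := le_ee_of (by norm_num) (by norm_num)
lemma hJhiB77 : JJ 1.22 ≤ 0.97481134 := JJ_le_of (by norm_num) (by norm_num) (by norm_num)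
lemma heloB77 : (0.47462596:ℝ) ≤ ee 1.22 := le_ee_of (by norm_num) (by norm_num)
lemma hJhiB78 : JJ 1.24 ≤ 0.98427236 := JJ_le_of (by norm_num) (by norm_num) (by norm_num)
lemma heloB78 : (0.46297637:ℝ) ≤ ee 1.24 := le_ee_of (by norm_num) (by norm_num)
lemma hJhiB79 : JJ 1.26 ≤ 0.99351936 := JJ_le_of (by norm_num) (by norm_num) (by norm_num)
lemma heloB79 : (0.45140639:ℝ) ≤ ee 1.26 := le_ee_of (by norm_num) (by norm_num)
lemma hJhiB80 : JJ 1.28 ≤ 1.00255745 := JJ_le_of (by norm_num) (by norm_num) (by norm_num)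
lemma heloB80 : (0.43991916:ℝ) ≤ ee 1.28 := le_ee_of (by norm_num) (by norm_num)
lemma hJhiB81 : JJ 1.3 ≤ 1.01139241 := JJ_le_of (by norm_num) (by norm_num) (by norm_num)
lemma heloB81 : (0.42851703:ℝ) ≤ ee 1.3 := le_ee_of (by norm_num) (by norm_num)
lemma hJhiB82 : JJ 1.32 ≤ 1.02003076 := JJ_le_of (by norm_num) (by norm_num) (by norm_num)
lemma heloB82 : (0.41720145:ℝ) ≤ ee 1.32 := le_ee_of (by norm_num) (by norm_num)
lemma hJhiB83 : JJ 1.34 ≤ 1.0284798 := JJ_le_of (by norm_num) (by norm_num) (by norm_num)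
lemma heloB83 : (0.40597294:ℝ) ≤ ee 1.34 := le_ee_of (by norm_num) (by norm_num)
lemma hJhiB84 : JJ 1.36 ≤ 1.03674779 := JJ_le_of (by norm_num) (by norm_num) (by norm_num)
lemma heloB84 : (0.39483095:ℝ) ≤ ee 1.36 := le_ee_of (by norm_num) (by norm_num)
lemma hJhiB85 : JJ 1.38 ≤ 1.04484397 := JJ_le_of (by norm_num) (by norm_num) (by norm_num)
lemma heloB85 : (0.3837738:ℝ) ≤ ee 1.38 := le_ee_of (by norm_num) (by norm_num)
lemma hJhiB86 : JJ 1.4 ≤ 1.05277876 := JJ_le_of (by norm_num) (by norm_num) (by norm_num)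
lemma heloB86 : (0.3727986:ℝ) ≤ ee 1.4 := le_ee_of (by norm_num) (by norm_num)

set_option maxHeartbeats 4000000 in
/-- Any negative solution `x*` of `-xΦ(x) = φ(x)(1 - 2Φ(x))` satisfies
`x* ∈ (-0.85, -0.84)`, and consequently `q* = Φ(x*) ∈ (0.197, 0.199)`. -/
theorem stmt_11 (x : ℝ) (hx : x < 0)
    (heq : -x * stdCdf x = stdPdf x * (1 - 2 * stdCdf x)) :
    x ∈ Set.Ioo (-0.85 : ℝ) (-0.84) ∧ stdCdf x ∈ Set.Ioo (0.197 : ℝ) 0.199 := by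
  have ht0 : (0:ℝ) < -x := by linarith
  have hq : stdCdf x = 1/2 - (Real.sqrt (2*Real.pi))⁻¹ * JJ (-x) := stdCdf_repr hx.le
  have hp : stdPdf x = (Real.sqrt (2*Real.pi))⁻¹ * ee (-x) := by
    show (Real.sqrt (2 * Real.pi))⁻¹ * Real.exp (-x ^ 2 / 2) = _
    rw [ee]; ring_nf
  have hgood : 0.847 < -x ∧ -x < 0.85 := by
    by_contra hcon
    push_neg at hcon
    have hcpos := c_pos
    have hE : Real.sqrt (2*Real.pi) * (-x) * (Real.sqrt (2*Real.pi)/2 - JJ (-x))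
        = 2 * ee (-x) * JJ (-x) := by
      set c := Real.sqrt (2*Real.pi) with hc
      have hcne : c ≠ 0 := ne_of_gt hcpos
      rw [hq, hp] at heq
      field_simp at heq
      have h2 : (2*c) * (c * (-x) * (c/2 - JJ (-x))) = (2*c) * (2 * ee (-x) * JJ (-x)) := by
        linear_combination c * heq
      exact mul_left_cancel₀ (by positivity) h2
    rcases le_or_gt (-x) 0.455 with h0 | h0
    · exact regionA1 ht0 h0 hE
    rcases le_or_gt (-x) 0.475 with h1 | h1
    · exact bracketA h0.le h1 (by norm_num) hJpA1 hepA0 hE (by norm_num)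
    rcases le_or_gt (-x) 0.495 with h2 | h2
    · exact bracketA h1.le h2 (by norm_num) hJpA2 hepA1 hE (by norm_num)
    rcases le_or_gt (-x) 0.515 with h3 | h3
    · exact bracketA h2.le h3 (by norm_num) hJpA3 hepA2 hE (by norm_num)
    rcases le_or_gt (-x) 0.535 with h4 | h4
    · exact bracketA h3.le h4 (by norm_num) hJpA4 hepA3 hE (by norm_num)
    rcases le_or_gt (-x) 0.555 with h5 | h5
    · exact bracketA h4.le h5 (by norm_num) hJpA5 hepA4 hE (by norm_num)
    rcases le_or_gt (-x) 0.575 with h6 | h6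
    · exact bracketA h5.le h6 (by norm_num) hJpA6 hepA5 hE (by norm_num)
    rcases le_or_gt (-x) 0.595 with h7 | h7
    · exact bracketA h6.le h7 (by norm_num) hJpA7 hepA6 hE (by norm_num)
    rcases le_or_gt (-x) 0.615 with h8 | h8
    · exact bracketA h7.le h8 (by norm_num) hJpA8 hepA7 hE (by norm_num)
    rcases le_or_gt (-x) 0.635 with h9 | h9
    · exact bracketA h8.le h9 (by norm_num) hJpA9 hepA8 hE (by norm_num)
    rcases le_or_gt (-x) 0.655 with h10 | h10
    · exact bracketA h9.le h10 (by norm_num) hJpA10 hepA9 hE (by norm_num)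
    rcases le_or_gt (-x) 0.675 with h11 | h11
    · exact bracketA h10.le h11 (by norm_num) hJpA11 hepA10 hE (by norm_num)
    rcases le_or_gt (-x) 0.685 with h12 | h12
    · exact bracketA h11.le h12 (by norm_num) hJpA12 hepA11 hE (by norm_num)
    rcases le_or_gt (-x) 0.695 with h13 | h13
    · exact bracketA h12.le h13 (by norm_num) hJpA13 hepA12 hE (by norm_num)
    rcases le_or_gt (-x) 0.705 with h14 | h14
    · exact bracketA h13.le h14 (by norm_num) hJpA14 hepA13 hE (by norm_num)
    rcases le_or_gt (-x) 0.715 with h15 | h15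
    · exact bracketA h14.le h15 (by norm_num) hJpA15 hepA14 hE (by norm_num)
    rcases le_or_gt (-x) 0.725 with h16 | h16
    · exact bracketA h15.le h16 (by norm_num) hJpA16 hepA15 hE (by norm_num)
    rcases le_or_gt (-x) 0.735 with h17 | h17
    · exact bracketA h16.le h17 (by norm_num) hJpA17 hepA16 hE (by norm_num)
    rcases le_or_gt (-x) 0.745 with h18 | h18
    · exact bracketA h17.le h18 (by norm_num) hJpA18 hepA17 hE (by norm_num)
    rcases le_or_gt (-x) 0.755 with h19 | h19
    · exact bracketA h18.le h19 (by norm_num) hJpA19 hepA18 hE (by norm_num)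
    rcases le_or_gt (-x) 0.76 with h20 | h20
    · exact bracketA h19.le h20 (by norm_num) hJpA20 hepA19 hE (by norm_num)
    rcases le_or_gt (-x) 0.765 with h21 | h21
    · exact bracketA h20.le h21 (by norm_num) hJpA21 hepA20 hE (by norm_num)
    rcases le_or_gt (-x) 0.77 with h22 | h22
    · exact bracketA h21.le h22 (by norm_num) hJpA22 hepA21 hE (by norm_num)
    rcases le_or_gt (-x) 0.775 with h23 | h23
    · exact bracketA h22.le h23 (by norm_num) hJpA23 hepA22 hE (by norm_num)
    rcases le_or_gt (-x) 0.78 with h24 | h24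
    · exact bracketA h23.le h24 (by norm_num) hJpA24 hepA23 hE (by norm_num)
    rcases le_or_gt (-x) 0.785 with h25 | h25
    · exact bracketA h24.le h25 (by norm_num) hJpA25 hepA24 hE (by norm_num)
    rcases le_or_gt (-x) 0.79 with h26 | h26
    · exact bracketA h25.le h26 (by norm_num) hJpA26 hepA25 hE (by norm_num)
    rcases le_or_gt (-x) 0.795 with h27 | h27
    · exact bracketA h26.le h27 (by norm_num) hJpA27 hepA26 hE (by norm_num)
    rcases le_or_gt (-x) 0.8 with h28 | h28
    · exact bracketA h27.le h28 (by norm_num) hJpA28 hepA27 hE (by norm_num)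
    rcases le_or_gt (-x) 0.805 with h29 | h29
    · exact bracketA h28.le h29 (by norm_num) hJpA29 hepA28 hE (by norm_num)
    rcases le_or_gt (-x) 0.807 with h30 | h30
    · exact bracketA h29.le h30 (by norm_num) hJpA30 hepA29 hE (by norm_num)
    rcases le_or_gt (-x) 0.809 with h31 | h31
    · exact bracketA h30.le h31 (by norm_num) hJpA31 hepA30 hE (by norm_num)
    rcases le_or_gt (-x) 0.811 with h32 | h32
    · exact bracketA h31.le h32 (by norm_num) hJpA32 hepA31 hE (by norm_num)
    rcases le_or_gt (-x) 0.813 with h33 | h33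
    · exact bracketA h32.le h33 (by norm_num) hJpA33 hepA32 hE (by norm_num)
    rcases le_or_gt (-x) 0.815 with h34 | h34
    · exact bracketA h33.le h34 (by norm_num) hJpA34 hepA33 hE (by norm_num)
    rcases le_or_gt (-x) 0.817 with h35 | h35
    · exact bracketA h34.le h35 (by norm_num) hJpA35 hepA34 hE (by norm_num)
    rcases le_or_gt (-x) 0.819 with h36 | h36
    · exact bracketA h35.le h36 (by norm_num) hJpA36 hepA35 hE (by norm_num)
    rcases le_or_gt (-x) 0.821 with h37 | h37
    · exact bracketA h36.le h37 (by norm_num) hJpA37 hepA36 hE (by norm_num)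
    rcases le_or_gt (-x) 0.823 with h38 | h38
    · exact bracketA h37.le h38 (by norm_num) hJpA38 hepA37 hE (by norm_num)
    rcases le_or_gt (-x) 0.825 with h39 | h39
    · exact bracketA h38.le h39 (by norm_num) hJpA39 hepA38 hE (by norm_num)
    rcases le_or_gt (-x) 0.827 with h40 | h40
    · exact bracketA h39.le h40 (by norm_num) hJpA40 hepA39 hE (by norm_num)
    rcases le_or_gt (-x) 0.829 with h41 | h41
    · exact bracketA h40.le h41 (by norm_num) hJpA41 hepA40 hE (by norm_num)
    rcases le_or_gt (-x) 0.831 with h42 | h42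
    · exact bracketA h41.le h42 (by norm_num) hJpA42 hepA41 hE (by norm_num)
    rcases le_or_gt (-x) 0.832 with h43 | h43
    · exact bracketA h42.le h43 (by norm_num) hJpA43 hepA42 hE (by norm_num)
    rcases le_or_gt (-x) 0.833 with h44 | h44
    · exact bracketA h43.le h44 (by norm_num) hJpA44 hepA43 hE (by norm_num)
    rcases le_or_gt (-x) 0.834 with h45 | h45
    · exact bracketA h44.le h45 (by norm_num) hJpA45 hepA44 hE (by norm_num)
    rcases le_or_gt (-x) 0.835 with h46 | h46
    · exact bracketA h45.le h46 (by norm_num) hJpA46 hepA45 hE (by norm_num)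
    rcases le_or_gt (-x) 0.836 with h47 | h47
    · exact bracketA h46.le h47 (by norm_num) hJpA47 hepA46 hE (by norm_num)
    rcases le_or_gt (-x) 0.837 with h48 | h48
    · exact bracketA h47.le h48 (by norm_num) hJpA48 hepA47 hE (by norm_num)
    rcases le_or_gt (-x) 0.838 with h49 | h49
    · exact bracketA h48.le h49 (by norm_num) hJpA49 hepA48 hE (by norm_num)
    rcases le_or_gt (-x) 0.839 with h50 | h50
    · exact bracketA h49.le h50 (by norm_num) hJpA50 hepA49 hE (by norm_num)
    rcases le_or_gt (-x) 0.8395 with h51 | h51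
    · exact bracketA h50.le h51 (by norm_num) hJpA51 hepA50 hE (by norm_num)
    rcases le_or_gt (-x) 0.84 with h52 | h52
    · exact bracketA h51.le h52 (by norm_num) hJpA52 hepA51 hE (by norm_num)
    rcases le_or_gt (-x) 0.8405 with h53 | h53
    · exact bracketA h52.le h53 (by norm_num) hJpA53 hepA52 hE (by norm_num)
    rcases le_or_gt (-x) 0.841 with h54 | h54
    · exact bracketA h53.le h54 (by norm_num) hJpA54 hepA53 hE (by norm_num)
    rcases le_or_gt (-x) 0.8415 with h55 | h55
    · exact bracketA h54.le h55 (by norm_num) hJpA55 hepA54 hE (by norm_num)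
    rcases le_or_gt (-x) 0.842 with h56 | h56
    · exact bracketA h55.le h56 (by norm_num) hJpA56 hepA55 hE (by norm_num)
    rcases le_or_gt (-x) 0.8425 with h57 | h57
    · exact bracketA h56.le h57 (by norm_num) hJpA57 hepA56 hE (by norm_num)
    rcases le_or_gt (-x) 0.843 with h58 | h58
    · exact bracketA h57.le h58 (by norm_num) hJpA58 hepA57 hE (by norm_num)
    rcases le_or_gt (-x) 0.8435 with h59 | h59
    · exact bracketA h58.le h59 (by norm_num) hJpA59 hepA58 hE (by norm_num)
    rcases le_or_gt (-x) 0.844 with h60 | h60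
    · exact bracketA h59.le h60 (by norm_num) hJpA60 hepA59 hE (by norm_num)
    rcases le_or_gt (-x) 0.8442 with h61 | h61
    · exact bracketA h60.le h61 (by norm_num) hJpA61 hepA60 hE (by norm_num)
    rcases le_or_gt (-x) 0.8444 with h62 | h62
    · exact bracketA h61.le h62 (by norm_num) hJpA62 hepA61 hE (by norm_num)
    rcases le_or_gt (-x) 0.8446 with h63 | h63
    · exact bracketA h62.le h63 (by norm_num) hJpA63 hepA62 hE (by norm_num)
    rcases le_or_gt (-x) 0.8448 with h64 | h64
    · exact bracketA h63.le h64 (by norm_num) hJpA64 hepA63 hE (by norm_num)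
    rcases le_or_gt (-x) 0.845 with h65 | h65
    · exact bracketA h64.le h65 (by norm_num) hJpA65 hepA64 hE (by norm_num)
    rcases le_or_gt (-x) 0.8452 with h66 | h66
    · exact bracketA h65.le h66 (by norm_num) hJpA66 hepA65 hE (by norm_num)
    rcases le_or_gt (-x) 0.8454 with h67 | h67
    · exact bracketA h66.le h67 (by norm_num) hJpA67 hepA66 hE (by norm_num)
    rcases le_or_gt (-x) 0.8456 with h68 | h68
    · exact bracketA h67.le h68 (by norm_num) hJpA68 hepA67 hE (by norm_num)
    rcases le_or_gt (-x) 0.8458 with h69 | h69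
    · exact bracketA h68.le h69 (by norm_num) hJpA69 hepA68 hE (by norm_num)
    rcases le_or_gt (-x) 0.846 with h70 | h70
    · exact bracketA h69.le h70 (by norm_num) hJpA70 hepA69 hE (by norm_num)
    rcases le_or_gt (-x) 0.8462 with h71 | h71
    · exact bracketA h70.le h71 (by norm_num) hJpA71 hepA70 hE (by norm_num)
    rcases le_or_gt (-x) 0.8464 with h72 | h72
    · exact bracketA h71.le h72 (by norm_num) hJpA72 hepA71 hE (by norm_num)
    rcases le_or_gt (-x) 0.8466 with h73 | h73
    · exact bracketA h72.le h73 (by norm_num) hJpA73 hepA72 hE (by norm_num)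
    rcases le_or_gt (-x) 0.8467 with h74 | h74
    · exact bracketA h73.le h74 (by norm_num) hJpA74 hepA73 hE (by norm_num)
    rcases le_or_gt (-x) 0.8468 with h75 | h75
    · exact bracketA h74.le h75 (by norm_num) hJpA75 hepA74 hE (by norm_num)
    rcases le_or_gt (-x) 0.8469 with h76 | h76
    · exact bracketA h75.le h76 (by norm_num) hJpA76 hepA75 hE (by norm_num)
    rcases le_or_gt (-x) 0.847 with h77 | h77
    · exact bracketA h76.le h77 (by norm_num) hJpA77 hepA76 hE (by norm_num)
    have h85 : (0.85:ℝ) ≤ -x := hcon h77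
    rcases le_or_gt (-x) 0.8501 with g1 | g1
    · exact bracketB h85 g1 (by norm_num) hJloB0 hJhiB1 (by norm_num) heloB1 (by norm_num) (by norm_num) hE (by norm_num)
    rcases le_or_gt (-x) 0.8502 with g2 | g2
    · exact bracketB g1.le g2 (by norm_num) hJloB1 hJhiB2 (by norm_num) heloB2 (by norm_num) (by norm_num) hE (by norm_num)
    rcases le_or_gt (-x) 0.8504 with g3 | g3
    · exact bracketB g2.le g3 (by norm_num) hJloB2 hJhiB3 (by norm_num) heloB3 (by norm_num) (by norm_num) hE (by norm_num)
    rcases le_or_gt (-x) 0.8506 with g4 | g4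
    · exact bracketB g3.le g4 (by norm_num) hJloB3 hJhiB4 (by norm_num) heloB4 (by norm_num) (by norm_num) hE (by norm_num)
    rcases le_or_gt (-x) 0.8508 with g5 | g5
    · exact bracketB g4.le g5 (by norm_num) hJloB4 hJhiB5 (by norm_num) heloB5 (by norm_num) (by norm_num) hE (by norm_num)
    rcases le_or_gt (-x) 0.851 with g6 | g6
    · exact bracketB g5.le g6 (by norm_num) hJloB5 hJhiB6 (by norm_num) heloB6 (by norm_num) (by norm_num) hE (by norm_num)
    rcases le_or_gt (-x) 0.8512 with g7 | g7
    · exact bracketB g6.le g7 (by norm_num) hJloB6 hJhiB7 (by norm_num) heloB7 (by norm_num) (by norm_num) hE (by norm_num)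
    rcases le_or_gt (-x) 0.8514 with g8 | g8
    · exact bracketB g7.le g8 (by norm_num) hJloB7 hJhiB8 (by norm_num) heloB8 (by norm_num) (by norm_num) hE (by norm_num)
    rcases le_or_gt (-x) 0.8516 with g9 | g9
    · exact bracketB g8.le g9 (by norm_num) hJloB8 hJhiB9 (by norm_num) heloB9 (by norm_num) (by norm_num) hE (by norm_num)
    rcases le_or_gt (-x) 0.8518 with g10 | g10
    · exact bracketB g9.le g10 (by norm_num) hJloB9 hJhiB10 (by norm_num) heloB10 (by norm_num) (by norm_num) hE (by norm_num)
    rcases le_or_gt (-x) 0.852 with g11 | g11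
    · exact bracketB g10.le g11 (by norm_num) hJloB10 hJhiB11 (by norm_num) heloB11 (by norm_num) (by norm_num) hE (by norm_num)
    rcases le_or_gt (-x) 0.8522 with g12 | g12
    · exact bracketB g11.le g12 (by norm_num) hJloB11 hJhiB12 (by norm_num) heloB12 (by norm_num) (by norm_num) hE (by norm_num)
    rcases le_or_gt (-x) 0.8524 with g13 | g13
    · exact bracketB g12.le g13 (by norm_num) hJloB12 hJhiB13 (by norm_num) heloB13 (by norm_num) (by norm_num) hE (by norm_num)
    rcases le_or_gt (-x) 0.8526 with g14 | g14
    · exact bracketB g13.le g14 (by norm_num) hJloB13 hJhiB14 (by norm_num) heloB14 (by norm_num) (by norm_num) hE (by norm_num)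
    rcases le_or_gt (-x) 0.8528 with g15 | g15
    · exact bracketB g14.le g15 (by norm_num) hJloB14 hJhiB15 (by norm_num) heloB15 (by norm_num) (by norm_num) hE (by norm_num)
    rcases le_or_gt (-x) 0.853 with g16 | g16
    · exact bracketB g15.le g16 (by norm_num) hJloB15 hJhiB16 (by norm_num) heloB16 (by norm_num) (by norm_num) hE (by norm_num)
    rcases le_or_gt (-x) 0.8535 with g17 | g17
    · exact bracketB g16.le g17 (by norm_num) hJloB16 hJhiB17 (by norm_num) heloB17 (by norm_num) (by norm_num) hE (by norm_num)
    rcases le_or_gt (-x) 0.854 with g18 | g18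
    · exact bracketB g17.le g18 (by norm_num) hJloB17 hJhiB18 (by norm_num) heloB18 (by norm_num) (by norm_num) hE (by norm_num)
    rcases le_or_gt (-x) 0.8545 with g19 | g19
    · exact bracketB g18.le g19 (by norm_num) hJloB18 hJhiB19 (by norm_num) heloB19 (by norm_num) (by norm_num) hE (by norm_num)
    rcases le_or_gt (-x) 0.855 with g20 | g20
    · exact bracketB g19.le g20 (by norm_num) hJloB19 hJhiB20 (by norm_num) heloB20 (by norm_num) (by norm_num) hE (by norm_num)
    rcases le_or_gt (-x) 0.8555 with g21 | g21
    · exact bracketB g20.le g21 (by norm_num) hJloB20 hJhiB21 (by norm_num) heloB21 (by norm_num) (by norm_num) hE (by norm_num)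
    rcases le_or_gt (-x) 0.856 with g22 | g22
    · exact bracketB g21.le g22 (by norm_num) hJloB21 hJhiB22 (by norm_num) heloB22 (by norm_num) (by norm_num) hE (by norm_num)
    rcases le_or_gt (-x) 0.8565 with g23 | g23
    · exact bracketB g22.le g23 (by norm_num) hJloB22 hJhiB23 (by norm_num) heloB23 (by norm_num) (by norm_num) hE (by norm_num)
    rcases le_or_gt (-x) 0.857 with g24 | g24
    · exact bracketB g23.le g24 (by norm_num) hJloB23 hJhiB24 (by norm_num) heloB24 (by norm_num) (by norm_num) hE (by norm_num)
    rcases le_or_gt (-x) 0.8575 with g25 | g25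
    · exact bracketB g24.le g25 (by norm_num) hJloB24 hJhiB25 (by norm_num) heloB25 (by norm_num) (by norm_num) hE (by norm_num)
    rcases le_or_gt (-x) 0.858 with g26 | g26
    · exact bracketB g25.le g26 (by norm_num) hJloB25 hJhiB26 (by norm_num) heloB26 (by norm_num) (by norm_num) hE (by norm_num)
    rcases le_or_gt (-x) 0.859 with g27 | g27
    · exact bracketB g26.le g27 (by norm_num) hJloB26 hJhiB27 (by norm_num) heloB27 (by norm_num) (by norm_num) hE (by norm_num)
    rcases le_or_gt (-x) 0.86 with g28 | g28
    · exact bracketB g27.le g28 (by norm_num) hJloB27 hJhiB28 (by norm_num) heloB28 (by norm_num) (by norm_num) hE (by norm_num)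
    rcases le_or_gt (-x) 0.861 with g29 | g29
    · exact bracketB g28.le g29 (by norm_num) hJloB28 hJhiB29 (by norm_num) heloB29 (by norm_num) (by norm_num) hE (by norm_num)
    rcases le_or_gt (-x) 0.862 with g30 | g30
    · exact bracketB g29.le g30 (by norm_num) hJloB29 hJhiB30 (by norm_num) heloB30 (by norm_num) (by norm_num) hE (by norm_num)
    rcases le_or_gt (-x) 0.863 with g31 | g31
    · exact bracketB g30.le g31 (by norm_num) hJloB30 hJhiB31 (by norm_num) heloB31 (by norm_num) (by norm_num) hE (by norm_num)
    rcases le_or_gt (-x) 0.864 with g32 | g32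
    · exact bracketB g31.le g32 (by norm_num) hJloB31 hJhiB32 (by norm_num) heloB32 (by norm_num) (by norm_num) hE (by norm_num)
    rcases le_or_gt (-x) 0.865 with g33 | g33
    · exact bracketB g32.le g33 (by norm_num) hJloB32 hJhiB33 (by norm_num) heloB33 (by norm_num) (by norm_num) hE (by norm_num)
    rcases le_or_gt (-x) 0.866 with g34 | g34
    · exact bracketB g33.le g34 (by norm_num) hJloB33 hJhiB34 (by norm_num) heloB34 (by norm_num) (by norm_num) hE (by norm_num)
    rcases le_or_gt (-x) 0.867 with g35 | g35
    · exact bracketB g34.le g35 (by norm_num) hJloB34 hJhiB35 (by norm_num) heloB35 (by norm_num) (by norm_num) hE (by norm_num)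
    rcases le_or_gt (-x) 0.869 with g36 | g36
    · exact bracketB g35.le g36 (by norm_num) hJloB35 hJhiB36 (by norm_num) heloB36 (by norm_num) (by norm_num) hE (by norm_num)
    rcases le_or_gt (-x) 0.871 with g37 | g37
    · exact bracketB g36.le g37 (by norm_num) hJloB36 hJhiB37 (by norm_num) heloB37 (by norm_num) (by norm_num) hE (by norm_num)
    rcases le_or_gt (-x) 0.873 with g38 | g38
    · exact bracketB g37.le g38 (by norm_num) hJloB37 hJhiB38 (by norm_num) heloB38 (by norm_num) (by norm_num) hE (by norm_num)
    rcases le_or_gt (-x) 0.875 with g39 | g39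
    · exact bracketB g38.le g39 (by norm_num) hJloB38 hJhiB39 (by norm_num) heloB39 (by norm_num) (by norm_num) hE (by norm_num)
    rcases le_or_gt (-x) 0.877 with g40 | g40
    · exact bracketB g39.le g40 (by norm_num) hJloB39 hJhiB40 (by norm_num) heloB40 (by norm_num) (by norm_num) hE (by norm_num)
    rcases le_or_gt (-x) 0.879 with g41 | g41
    · exact bracketB g40.le g41 (by norm_num) hJloB40 hJhiB41 (by norm_num) heloB41 (by norm_num) (by norm_num) hE (by norm_num)
    rcases le_or_gt (-x) 0.881 with g42 | g42
    · exact bracketB g41.le g42 (by norm_num) hJloB41 hJhiB42 (by norm_num) heloB42 (by norm_num) (by norm_num) hE (by norm_num)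
    rcases le_or_gt (-x) 0.883 with g43 | g43
    · exact bracketB g42.le g43 (by norm_num) hJloB42 hJhiB43 (by norm_num) heloB43 (by norm_num) (by norm_num) hE (by norm_num)
    rcases le_or_gt (-x) 0.885 with g44 | g44
    · exact bracketB g43.le g44 (by norm_num) hJloB43 hJhiB44 (by norm_num) heloB44 (by norm_num) (by norm_num) hE (by norm_num)
    rcases le_or_gt (-x) 0.887 with g45 | g45
    · exact bracketB g44.le g45 (by norm_num) hJloB44 hJhiB45 (by norm_num) heloB45 (by norm_num) (by norm_num) hE (by norm_num)
    rcases le_or_gt (-x) 0.889 with g46 | g46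
    · exact bracketB g45.le g46 (by norm_num) hJloB45 hJhiB46 (by norm_num) heloB46 (by norm_num) (by norm_num) hE (by norm_num)
    rcases le_or_gt (-x) 0.891 with g47 | g47
    · exact bracketB g46.le g47 (by norm_num) hJloB46 hJhiB47 (by norm_num) heloB47 (by norm_num) (by norm_num) hE (by norm_num)
    rcases le_or_gt (-x) 0.893 with g48 | g48
    · exact bracketB g47.le g48 (by norm_num) hJloB47 hJhiB48 (by norm_num) heloB48 (by norm_num) (by norm_num) hE (by norm_num)
    rcases le_or_gt (-x) 0.895 with g49 | g49
    · exact bracketB g48.le g49 (by norm_num) hJloB48 hJhiB49 (by norm_num) heloB49 (by norm_num) (by norm_num) hE (by norm_num)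
    rcases le_or_gt (-x) 0.9 with g50 | g50
    · exact bracketB g49.le g50 (by norm_num) hJloB49 hJhiB50 (by norm_num) heloB50 (by norm_num) (by norm_num) hE (by norm_num)
    rcases le_or_gt (-x) 0.905 with g51 | g51
    · exact bracketB g50.le g51 (by norm_num) hJloB50 hJhiB51 (by norm_num) heloB51 (by norm_num) (by norm_num) hE (by norm_num)
    rcases le_or_gt (-x) 0.91 with g52 | g52
    · exact bracketB g51.le g52 (by norm_num) hJloB51 hJhiB52 (by norm_num) heloB52 (by norm_num) (by norm_num) hE (by norm_num)
    rcases le_or_gt (-x) 0.915 with g53 | g53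
    · exact bracketB g52.le g53 (by norm_num) hJloB52 hJhiB53 (by norm_num) heloB53 (by norm_num) (by norm_num) hE (by norm_num)
    rcases le_or_gt (-x) 0.92 with g54 | g54
    · exact bracketB g53.le g54 (by norm_num) hJloB53 hJhiB54 (by norm_num) heloB54 (by norm_num) (by norm_num) hE (by norm_num)
    rcases le_or_gt (-x) 0.925 with g55 | g55
    · exact bracketB g54.le g55 (by norm_num) hJloB54 hJhiB55 (by norm_num) heloB55 (by norm_num) (by norm_num) hE (by norm_num)
    rcases le_or_gt (-x) 0.93 with g56 | g56
    · exact bracketB g55.le g56 (by norm_num) hJloB55 hJhiB56 (by norm_num) heloB56 (by norm_num) (by norm_num) hE (by norm_num)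
    rcases le_or_gt (-x) 0.935 with g57 | g57
    · exact bracketB g56.le g57 (by norm_num) hJloB56 hJhiB57 (by norm_num) heloB57 (by norm_num) (by norm_num) hE (by norm_num)
    rcases le_or_gt (-x) 0.94 with g58 | g58
    · exact bracketB g57.le g58 (by norm_num) hJloB57 hJhiB58 (by norm_num) heloB58 (by norm_num) (by norm_num) hE (by norm_num)
    rcases le_or_gt (-x) 0.95 with g59 | g59
    · exact bracketB g58.le g59 (by norm_num) hJloB58 hJhiB59 (by norm_num) heloB59 (by norm_num) (by norm_num) hE (by norm_num)
    rcases le_or_gt (-x) 0.96 with g60 | g60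
    · exact bracketB g59.le g60 (by norm_num) hJloB59 hJhiB60 (by norm_num) heloB60 (by norm_num) (by norm_num) hE (by norm_num)
    rcases le_or_gt (-x) 0.97 with g61 | g61
    · exact bracketB g60.le g61 (by norm_num) hJloB60 hJhiB61 (by norm_num) heloB61 (by norm_num) (by norm_num) hE (by norm_num)
    rcases le_or_gt (-x) 0.98 with g62 | g62
    · exact bracketB g61.le g62 (by norm_num) hJloB61 hJhiB62 (by norm_num) heloB62 (by norm_num) (by norm_num) hE (by norm_num)
    rcases le_or_gt (-x) 0.99 with g63 | g63
    · exact bracketB g62.le g63 (by norm_num) hJloB62 hJhiB63 (by norm_num) heloB63 (by norm_num) (by norm_num) hE (by norm_num)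
    rcases le_or_gt (-x) 1 with g64 | g64
    · exact bracketB g63.le g64 (by norm_num) hJloB63 hJhiB64 (by norm_num) heloB64 (by norm_num) (by norm_num) hE (by norm_num)
    rcases le_or_gt (-x) 1.01 with g65 | g65
    · exact bracketB g64.le g65 (by norm_num) hJloB64 hJhiB65 (by norm_num) heloB65 (by norm_num) (by norm_num) hE (by norm_num)
    rcases le_or_gt (-x) 1.02 with g66 | g66
    · exact bracketB g65.le g66 (by norm_num) hJloB65 hJhiB66 (by norm_num) heloB66 (by norm_num) (by norm_num) hE (by norm_num)
    rcases le_or_gt (-x) 1.03 with g67 | g67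
    · exact bracketB g66.le g67 (by norm_num) hJloB66 hJhiB67 (by norm_num) heloB67 (by norm_num) (by norm_num) hE (by norm_num)
    rcases le_or_gt (-x) 1.04 with g68 | g68
    · exact bracketB g67.le g68 (by norm_num) hJloB67 hJhiB68 (by norm_num) heloB68 (by norm_num) (by norm_num) hE (by norm_num)
    rcases le_or_gt (-x) 1.06 with g69 | g69
    · exact bracketB g68.le g69 (by norm_num) hJloB68 hJhiB69 (by norm_num) heloB69 (by norm_num) (by norm_num) hE (by norm_num)
    rcases le_or_gt (-x) 1.08 with g70 | g70
    · exact bracketB g69.le g70 (by norm_num) hJloB69 hJhiB70 (by norm_num) heloB70 (by norm_num) (by norm_num) hE (by norm_num)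
    rcases le_or_gt (-x) 1.1 with g71 | g71
    · exact bracketB g70.le g71 (by norm_num) hJloB70 hJhiB71 (by norm_num) heloB71 (by norm_num) (by norm_num) hE (by norm_num)
    rcases le_or_gt (-x) 1.12 with g72 | g72
    · exact bracketB g71.le g72 (by norm_num) hJloB71 hJhiB72 (by norm_num) heloB72 (by norm_num) (by norm_num) hE (by norm_num)
    rcases le_or_gt (-x) 1.14 with g73 | g73
    · exact bracketB g72.le g73 (by norm_num) hJloB72 hJhiB73 (by norm_num) heloB73 (by norm_num) (by norm_num) hE (by norm_num)
    rcases le_or_gt (-x) 1.16 with g74 | g74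
    · exact bracketB g73.le g74 (by norm_num) hJloB73 hJhiB74 (by norm_num) heloB74 (by norm_num) (by norm_num) hE (by norm_num)
    rcases le_or_gt (-x) 1.18 with g75 | g75
    · exact bracketB g74.le g75 (by norm_num) hJloB74 hJhiB75 (by norm_num) heloB75 (by norm_num) (by norm_num) hE (by norm_num)
    rcases le_or_gt (-x) 1.2 with g76 | g76
    · exact bracketB g75.le g76 (by norm_num) hJloB75 hJhiB76 (by norm_num) heloB76 (by norm_num) (by norm_num) hE (by norm_num)
    rcases le_or_gt (-x) 1.22 with g77 | g77
    · exact bracketB g76.le g77 (by norm_num) hJloB76 hJhiB77 (by norm_num) heloB77 (by norm_num) (by norm_num) hE (by norm_num)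
    rcases le_or_gt (-x) 1.24 with g78 | g78
    · exact bracketB g77.le g78 (by norm_num) hJloB77 hJhiB78 (by norm_num) heloB78 (by norm_num) (by norm_num) hE (by norm_num)
    rcases le_or_gt (-x) 1.26 with g79 | g79
    · exact bracketB g78.le g79 (by norm_num) hJloB78 hJhiB79 (by norm_num) heloB79 (by norm_num) (by norm_num) hE (by norm_num)
    rcases le_or_gt (-x) 1.28 with g80 | g80
    · exact bracketB g79.le g80 (by norm_num) hJloB79 hJhiB80 (by norm_num) heloB80 (by norm_num) (by norm_num) hE (by norm_num)
    rcases le_or_gt (-x) 1.3 with g81 | g81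
    · exact bracketB g80.le g81 (by norm_num) hJloB80 hJhiB81 (by norm_num) heloB81 (by norm_num) (by norm_num) hE (by norm_num)
    rcases le_or_gt (-x) 1.32 with g82 | g82
    · exact bracketB g81.le g82 (by norm_num) hJloB81 hJhiB82 (by norm_num) heloB82 (by norm_num) (by norm_num) hE (by norm_num)
    rcases le_or_gt (-x) 1.34 with g83 | g83
    · exact bracketB g82.le g83 (by norm_num) hJloB82 hJhiB83 (by norm_num) heloB83 (by norm_num) (by norm_num) hE (by norm_num)
    rcases le_or_gt (-x) 1.36 with g84 | g84
    · exact bracketB g83.le g84 (by norm_num) hJloB83 hJhiB84 (by norm_num) heloB84 (by norm_num) (by norm_num) hE (by norm_num)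
    rcases le_or_gt (-x) 1.38 with g85 | g85
    · exact bracketB g84.le g85 (by norm_num) hJloB84 hJhiB85 (by norm_num) heloB85 (by norm_num) (by norm_num) hE (by norm_num)
    rcases le_or_gt (-x) 1.4 with g86 | g86
    · exact bracketB g85.le g86 (by norm_num) hJloB85 hJhiB86 (by norm_num) heloB86 (by norm_num) (by norm_num) hE (by norm_num)
    have htail := tail_lemma (x := x) (by linarith)
    have heq2 : stdCdf x * (2*stdPdf x - x) = stdPdf x := by linear_combination heq
    linarith
  obtain ⟨hg1, hg2⟩ := hgood
  have hcl := c_lo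
  have hch := c_hi
  have hcp := c_pos
  have hJm1 : JJ 0.847 ≤ JJ (-x) := JJ_mono (by linarith)
  have hJm2 : JJ (-x) ≤ JJ 0.85 := JJ_mono (by linarith)
  have hJl : (0.75575143:ℝ) ≤ JJ 0.847 := le_JJ_of (by norm_num) (by norm_num) (by norm_num)
  have hJh : JJ 0.85 ≤ 0.75785049 := JJ_le_of (by norm_num) (by norm_num) (by norm_num)
  have hJpos : (0:ℝ) ≤ JJ (-x) := JJ_nonneg (by linarith)
  have hinvle : (Real.sqrt (2*Real.pi))⁻¹ ≤ (2.5066282:ℝ)⁻¹ := by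
    apply inv_anti₀ (by norm_num) hcl.le
  have hinvge : (2.5066283:ℝ)⁻¹ ≤ (Real.sqrt (2*Real.pi))⁻¹ := by
    apply inv_anti₀ (by positivity) hch.le
  have hub : (2.5066283:ℝ)⁻¹ * 0.75575143 ≤ (Real.sqrt (2*Real.pi))⁻¹ * JJ (-x) :=
    mul_le_mul hinvge (le_trans hJl hJm1) (by norm_num) (by positivity)
  have hlb : (Real.sqrt (2*Real.pi))⁻¹ * JJ (-x) ≤ (2.5066282:ℝ)⁻¹ * 0.75785049 :=
    mul_le_mul hinvle (le_trans hJm2 hJh) hJpos (by norm_num)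
  have hn1 : (0.301:ℝ) < (2.5066283:ℝ)⁻¹ * 0.75575143 := by norm_num
  have hn2 : (2.5066282:ℝ)⁻¹ * 0.75785049 < 0.303 := by norm_num
  refine ⟨⟨by linarith, by linarith⟩, ⟨by rw [hq]; linarith, by rw [hq]; linarith⟩⟩
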